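/- arXiv:2310.14582 — 7 statements merged into one kernel-verified Lean document; each statement's English description precedes it below -/
import Mathlib

section
/- Let A₁ ⊆ A be a subalgebra with 1_B ∈ A₁ and F₁ ⊆ F a subalgebra such that the pair (A₁, F₁) is cyclic-antimonotone independent and A₁ F₁ A₁ ⊆ F₁ (i.e. a f a′ ∈ F₁ for all a, a′ ∈ A₁ and f ∈ F₁). Then either φ(a a′) = φ(a) φ(a′) for all a, a′ ∈ A₁, or Φ(f) = 0 for all f ∈ F₁. (So, except in these degenerate cases, a pair (A₁, F₁) with F₁ closed under the A₁-action cannot be cyclic-antimonotone independent.) -/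
open scoped BigOperators

namespace TypeBPrime

variable {B : Type*} [Ring B] [Algebra ℂ B]

/-- The alternating word `a 0 * (f 0 * a 1) * ⋯ * (f (n-1) * a n)`. -/
def altWord {n : ℕ} (a : Fin (n + 1) → B) (f : Fin n → B) : B :=
  a 0 * (List.ofFn fun k : Fin n => f k * a k.succ).prod

/-- Cyclic-antimonotone independence of the pair `(A₁, F₁)` with respect to `(φ, Φ)`:
`Φ(a₀ f₁ a₁ ⋯ fₙ aₙ) = φ(a₀ aₙ) · φ(a₁) ⋯ φ(a_{n-1}) · Φ(f₁ ⋯ fₙ)` for all `n ≥ 1`. -/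
def CyclicAntimonotone (φ Φ : B → ℂ) (A₁ F₁ : Set B) : Prop :=
  ∀ n : ℕ, 0 < n → ∀ (a : Fin (n + 1) → B) (f : Fin n → B),
    (∀ k, a k ∈ A₁) → (∀ k, f k ∈ F₁) →
    Φ (altWord a f) =
      φ (a 0 * a (Fin.last n)) *
        (∏ k ∈ Finset.Ioo (0 : Fin (n + 1)) (Fin.last n), φ (a k)) *
        Φ (List.ofFn f).prod

/-- Freeness of a family of subsets with respect to `φ`:
alternating words in centered elements are centered. -/
def IsFreeFamily {ι : Type*} (φ : B → ℂ) (Alg : ι → Set B) : Prop :=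
  ∀ (n : ℕ) (idx : Fin (n + 1) → ι) (a : Fin (n + 1) → B),
    (∀ k : Fin n, idx k.castSucc ≠ idx k.succ) →
    (∀ k, a k ∈ Alg (idx k)) → (∀ k, φ (a k) = 0) →
    φ (List.ofFn a).prod = 0

/-- Infinitesimal freeness of a family of subsets with respect to `(φ, φ')`. -/
def IsInfFree {ι : Type*} (φ φ' : B → ℂ) (Alg : ι → Set B) : Prop :=
  IsFreeFamily φ Alg ∧
  (∀ (n : ℕ) (idx : Fin (n + 1) → ι) (b : Fin (n + 1) → B),
    (∀ k : Fin n, idx k.castSucc ≠ idx k.succ) →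
    (∀ k, b k ∈ Alg (idx k)) → (∀ k, φ (b k) = 0) →
    ¬(Even n ∧ ∀ k, idx k = idx k.rev) →
    φ' (List.ofFn b).prod = 0) ∧
  (∀ (m : ℕ) (idx : Fin (2 * m + 1) → ι) (b : Fin (2 * m + 1) → B),
    (∀ k : Fin (2 * m), idx k.castSucc ≠ idx k.succ) →
    (∀ k, b k ∈ Alg (idx k)) → (∀ k, φ (b k) = 0) →
    (∀ k, idx k = idx k.rev) →
    φ' (List.ofFn b).prod =
      (∏ j : Fin m,
          φ (b (Fin.castLE (by omega) j) * b (Fin.castLE (by omega) j).rev)) *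
        φ' (b ⟨m, by omega⟩))

/-- Trivial independence with respect to `Φ`: alternating words of length `≥ 2` vanish. -/
def TrivIndep {ι : Type*} (Φ : B → ℂ) (Fj : ι → Set B) : Prop :=
  ∀ (n : ℕ) (idx : Fin (n + 2) → ι) (f : Fin (n + 2) → B),
    (∀ k : Fin (n + 1), idx k.castSucc ≠ idx k.succ) →
    (∀ k, f k ∈ Fj (idx k)) →
    Φ (List.ofFn f).prod = 0

/-- Boolean independence with respect to `ψ`. -/
def BoolIndep {ι : Type*} (ψ : B → ℂ) (C : ι → Set B) : Prop :=
  ∀ (n : ℕ) (idx : Fin (n + 1) → ι) (c : Fin (n + 1) → B),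
    (∀ k : Fin n, idx k.castSucc ≠ idx k.succ) →
    (∀ k, c k ∈ C (idx k)) →
    ψ (List.ofFn c).prod = ∏ k, ψ (c k)

/-- Conditional freeness with respect to `(φ, ψ)`. -/
def CFree {ι : Type*} (φ ψ : B → ℂ) (Alg : ι → Set B) : Prop :=
  IsFreeFamily φ Alg ∧
  ∀ (n : ℕ) (idx : Fin (n + 1) → ι) (b : Fin (n + 1) → B),
    (∀ k : Fin n, idx k.castSucc ≠ idx k.succ) →
    (∀ k, b k ∈ Alg (idx k)) → (∀ k, φ (b k) = 0) →
    ψ (List.ofFn b).prod = ∏ k, ψ (b k)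

/-- The unital subspace `ℂ·1_B + F₁`. -/
def unitize (F₁ : Set B) : Set B :=
  {x | ∃ c : ℂ, ∃ f ∈ F₁, x = algebraMap ℂ B c + f}

/-- The set of alternating words `a₀ f₁ a₁ ⋯ fₙ aₙ` with letters from `A₁` and `F₁`. -/
def wordSet (A₁ F₁ : Set B) : Set B :=
  {x | ∃ n : ℕ, 0 < n ∧ ∃ (a : Fin (n + 1) → B) (f : Fin n → B),
    (∀ k, a k ∈ A₁) ∧ (∀ k, f k ∈ F₁) ∧ x = altWord a f}

/-- `A₁⟨F₁⟩₀`: the linear span of all alternating words `a₀ f₁ a₁ ⋯ fₙ aₙ`. -/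
def wordSpan (A₁ F₁ : Set B) : Set B :=
  (Submodule.span ℂ (wordSet A₁ F₁) : Submodule ℂ B)

/-- The type B′ subalgebra `A₁⟨F₁⟩ = A₁ + A₁⟨F₁⟩₀`. -/
def typeBSub (A₁ F₁ : Set B) : Set B :=
  {x | ∃ a ∈ A₁, ∃ f ∈ wordSpan A₁ F₁, x = a + f}

/-- `(tₙ)` is the inverse Markov–Krein transform of the sequence `(mₙ)`:
`(n+1)·mₙ = Σ_{j=0}^{n} tⱼ m_{n−j}` for all `n ≥ 0`. -/
def IsInvMK (m t : ℕ → ℂ) : Prop :=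
  ∀ n : ℕ, ((n : ℂ) + 1) * m n = ∑ j ∈ Finset.range (n + 1), t j * m (n - j)

theorem statement0
    {B : Type*} [Ring B] [Algebra ℂ B]
    (A : Subalgebra ℂ B) (F : Submodule ℂ B)
    (hFmulL : ∀ b : B, ∀ f ∈ F, b * f ∈ F)
    (hFmulR : ∀ b : B, ∀ f ∈ F, f * b ∈ F)
    (hAF : ∀ x ∈ A, x ∈ F → x = 0)
    (hdec : ∀ x : B, ∃ a ∈ A, ∃ f ∈ F, x = a + f)
    (φ Φ : B →ₗ[ℂ] ℂ)
    (hφ1 : φ 1 = 1) (hφF : ∀ f ∈ F, φ f = 0)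
    (A₁ : Subalgebra ℂ B) (hA₁A : A₁ ≤ A)
    (F₁ : NonUnitalSubalgebra ℂ B) (hF₁F : ∀ f ∈ F₁, f ∈ F)
    (hcam : CyclicAntimonotone ⇑φ ⇑Φ (A₁ : Set B) (F₁ : Set B))
    (hclosed : ∀ a ∈ A₁, ∀ f ∈ F₁, ∀ a' ∈ A₁, a * f * a' ∈ F₁) :
    (∀ a ∈ A₁, ∀ a' ∈ A₁, φ (a * a') = φ a * φ a') ∨ (∀ f ∈ F₁, Φ f = 0) := by
  by_cases hΦ : ∀ g ∈ F₁, Φ g = 0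
  · exact Or.inr hΦ
  push_neg at hΦ
  obtain ⟨f, hf, hΦf⟩ := hΦ
  left
  intro a ha a' ha'
  have key : ∀ g ∈ F₁, ∀ x ∈ A₁, Φ (g * x) = φ x * Φ g := by
    intro g hg x hx
    have h := hcam 1 one_pos ![1, x] ![g] ?_ ?_
    · have hw : altWord ![1, x] ![g] = g * x := by
        simp [altWord, List.ofFn_succ]
      have hIoo : Finset.Ioo (0 : Fin 2) (Fin.last 1) = ∅ := by decide
      rw [hw, hIoo] at h
      simpa [List.ofFn_succ] using h
    · intro k; fin_cases k <;>
        simp [SetLike.mem_coe, Subalgebra.one_mem, hx]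
    · intro k; fin_cases k <;> simpa
  have hfa : f * a ∈ F₁ := by
    simpa using hclosed 1 (one_mem A₁) f hf a ha
  have e1 : Φ (f * (a * a')) = φ (a * a') * Φ f :=
    key f hf _ (mul_mem ha ha')
  have e2 : Φ (f * a * a') = φ a' * (φ a * Φ f) := by
    rw [key (f * a) hfa a' ha', key f hf a ha]
  rw [← mul_assoc] at e1
  have : φ (a * a') * Φ f = (φ a * φ a') * Φ f := by
    rw [← e1, e2]; ring
  exact mul_right_cancel₀ hΦf this

end TypeBPrime
end

section
/- Let A₁ ⊆ A be a subalgebra with 1_B ∈ A₁ and F₁ ⊆ F a subalgebra such that the pair (A₁, F₁) is cyclic-antimonotone independent. Suppose Φ(x y) = Φ(y x) for all x, y ∈ F, and suppose there exists f ∈ F₁ with Φ(f²) ≠ 0. Then φ is tracial on A₁, i.e. φ(a₁ a₂) = φ(a₂ a₁) for all a₁, a₂ ∈ A₁. -/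
open scoped BigOperators

namespace TypeBPrime

variable {B : Type*} [Ring B] [Algebra ℂ B]

theorem statement1
    {B : Type*} [Ring B] [Algebra ℂ B]
    (A : Subalgebra ℂ B) (F : Submodule ℂ B)
    (hFmulL : ∀ b : B, ∀ f ∈ F, b * f ∈ F)
    (hFmulR : ∀ b : B, ∀ f ∈ F, f * b ∈ F)
    (hAF : ∀ x ∈ A, x ∈ F → x = 0)
    (hdec : ∀ x : B, ∃ a ∈ A, ∃ f ∈ F, x = a + f)
    (φ Φ : B →ₗ[ℂ] ℂ)
    (hφ1 : φ 1 = 1) (hφF : ∀ f ∈ F, φ f = 0)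
    (A₁ : Subalgebra ℂ B) (hA₁A : A₁ ≤ A)
    (F₁ : NonUnitalSubalgebra ℂ B) (hF₁F : ∀ f ∈ F₁, f ∈ F)
    (hcam : CyclicAntimonotone ⇑φ ⇑Φ (A₁ : Set B) (F₁ : Set B))
    (hΦtr : ∀ x ∈ F, ∀ y ∈ F, Φ (x * y) = Φ (y * x))
    (hex : ∃ f ∈ F₁, Φ (f * f) ≠ 0) :
    ∀ a₁ ∈ A₁, ∀ a₂ ∈ A₁, φ (a₁ * a₂) = φ (a₂ * a₁) := by
  obtain ⟨f, hfF₁, hf2⟩ := hex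
  intro a₁ h₁ a₂ h₂
  have hfF : (f : B) ∈ F := hF₁F f hfF₁
  have hL : Φ ((f * a₁) * (a₂ * f)) = φ (a₁ * a₂) * Φ (f * f) := by
    have h := hcam 2 (by norm_num) ![1, a₁ * a₂, 1] ![f, f]
      (by intro k; fin_cases k <;> simp [h₁, h₂, mul_mem h₁ h₂, one_mem])
      (by intro k; fin_cases k <;> simpa using hfF₁)
    have w : altWord ![(1:B), a₁*a₂, 1] ![f, f] = (f * (a₁ * a₂)) * f := by
      simp [altWord, List.ofFn_succ]
    have hIoo : Finset.Ioo (0 : Fin 3) (Fin.last 2) = {1} := by decide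
    rw [w, hIoo] at h
    simp only [Finset.prod_singleton, List.ofFn_succ, List.ofFn_zero, List.prod_cons,
      List.prod_nil, Matrix.cons_val_zero, Matrix.cons_val_one, Matrix.head_cons,
      mul_one] at h
    have hlast : (![(1:B), a₁*a₂, 1]) (Fin.last 2) = 1 := by simp [Fin.last]
    rw [hlast, mul_one, hφ1, one_mul] at h
    rw [show (f * a₁) * (a₂ * f) = (f * (a₁ * a₂)) * f by noncomm_ring]
    exact h
  have hR : Φ ((a₂ * f) * (f * a₁)) = φ (a₂ * a₁) * Φ (f * f) := by
    have h := hcam 1 one_pos ![a₂, a₁] ![f * f]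
      (by intro k; fin_cases k <;> simp [h₁, h₂])
      (by intro k; fin_cases k <;> simpa using mul_mem hfF₁ hfF₁)
    have w : altWord ![a₂, a₁] ![f * f] = a₂ * (f * f) * a₁ := by
      simp [altWord, List.ofFn_succ]
      noncomm_ring
    have hIoo : Finset.Ioo (0 : Fin 2) (Fin.last 1) = ∅ := by decide
    rw [w, hIoo] at h
    simp only [Finset.prod_empty, mul_one, List.ofFn_succ, List.ofFn_zero, List.prod_cons,
      List.prod_nil, Matrix.cons_val_zero, Matrix.cons_val_one, Matrix.head_cons] at h
    have hlast : (![a₂, a₁]) (Fin.last 1) = a₁ := by simp [Fin.last]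
    rw [hlast] at h
    rw [show (a₂ * f) * (f * a₁) = a₂ * (f * f) * a₁ by noncomm_ring]
    exact h
  have htr := hΦtr (f * a₁) (hFmulR a₁ f hfF) (a₂ * f) (hFmulL a₂ f hfF)
  have key : φ (a₁ * a₂) * Φ (f * f) = φ (a₂ * a₁) * Φ (f * f) := by
    rw [← hL, ← hR, htr]
  exact mul_right_cancel₀ hf2 key

end TypeBPrime
end

section
/- Subalgebras (F_j)_{j∈J} of F are trivially independent with respect to Φ if and only if the unital subalgebras (ℂ·1_B + F_j)_{j∈J} of B are infinitesimally free with respect to (φ, φ′). -/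
open scoped BigOperators

namespace TypeBPrime

variable {B : Type*} [Ring B] [Algebra ℂ B]

theorem statement6
    {B : Type*} [Ring B] [Algebra ℂ B]
    (A : Subalgebra ℂ B) (F : Submodule ℂ B)
    (hFmulL : ∀ b : B, ∀ f ∈ F, b * f ∈ F)
    (hFmulR : ∀ b : B, ∀ f ∈ F, f * b ∈ F)
    (hAF : ∀ x ∈ A, x ∈ F → x = 0)
    (hdec : ∀ x : B, ∃ a ∈ A, ∃ f ∈ F, x = a + f)
    (φ Φ φ' : B →ₗ[ℂ] ℂ)
    (hφ1 : φ 1 = 1) (hφF : ∀ f ∈ F, φ f = 0)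
    (hφ'A : ∀ a ∈ A, φ' a = 0) (hφ'F : ∀ f ∈ F, φ' f = Φ f)
    {κ : Type*}
    (Fj : κ → NonUnitalSubalgebra ℂ B) (hFj : ∀ j, ∀ f ∈ Fj j, f ∈ F) :
    TrivIndep ⇑Φ (fun j => (Fj j : Set B)) ↔
      IsInfFree ⇑φ ⇑φ' (fun j => unitize (Fj j : Set B)) := by
  -- products of elements of `F` lie in `F`
  have hmemF : ∀ (n : ℕ) (g : Fin (n + 1) → B), (∀ k, g k ∈ F) →
      (List.ofFn g).prod ∈ F := by
    intro n g hg
    rw [List.ofFn_succ, List.prod_cons]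
    exact hFmulR _ _ (hg 0)
  -- a centered element of the unitization lies in the original subalgebra
  have hcent : ∀ (j : κ) (b : B), b ∈ unitize (Fj j : Set B) → φ b = 0 → b ∈ Fj j := by
    rintro j b ⟨c, f, hf, rfl⟩ hb
    have h1 : φ (algebraMap ℂ B c) = c := by
      rw [Algebra.algebraMap_eq_smul_one, map_smul, hφ1, smul_eq_mul, mul_one]
    have hc : c = 0 := by
      rw [map_add, h1, hφF f (hFj j f hf), add_zero] at hb
      exact hb
    rw [hc, map_zero, zero_add]
    exact hf
  constructor
  · -- trivial independence implies infinitesimal freeness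
    intro hT
    refine ⟨?_, ?_, ?_⟩
    · intro n idx a _ hmem hcentered
      exact hφF _ (hmemF n a fun k => hFj _ _ (hcent _ _ (hmem k) (hcentered k)))
    · intro n idx b halt hmem hc hne
      cases n with
      | zero =>
        exact absurd ⟨Even.zero, fun k => congrArg idx
          (Fin.ext (by have h := k.isLt; simp only [Fin.val_rev]; omega))⟩ hne
      | succ m =>
        have hb : ∀ k, b k ∈ Fj (idx k) := fun k => hcent _ _ (hmem k) (hc k)
        rw [hφ'F _ (hmemF _ b fun k => hFj _ _ (hb k))]
        exact hT m idx b halt hb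
    · intro m idx b halt hmem hc hpal
      have hb : ∀ k, b k ∈ Fj (idx k) := fun k => hcent _ _ (hmem k) (hc k)
      cases m with
      | zero => simp
      | succ m' =>
        have hL : φ' (List.ofFn b).prod = 0 := by
          rw [hφ'F _ (hmemF _ b fun k => hFj _ _ (hb k))]
          exact hT (2 * m' + 1) idx b halt hb
        have hR : φ (b (Fin.castLE (by omega) (0 : Fin (m' + 1))) *
            b (Fin.castLE (by omega) (0 : Fin (m' + 1))).rev) = 0 :=
          hφF _ (hFmulR _ _ (hFj _ _ (hb _)))
        rw [hL, Finset.prod_eq_zero (Finset.mem_univ (0 : Fin (m' + 1))) hR, zero_mul]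
  · -- infinitesimal freeness implies trivial independence
    rintro ⟨_, h2, h3⟩ n idx f halt hmem
    have hfF : ∀ k, f k ∈ F := fun k => hFj _ _ (hmem k)
    have hcentf : ∀ k, φ (f k) = 0 := fun k => hφF _ (hfF k)
    have hmemU : ∀ k, f k ∈ unitize (Fj (idx k) : Set B) := fun k =>
      ⟨0, f k, hmem k, by simp⟩
    rw [← hφ'F _ (hmemF _ f hfF)]
    by_cases hp : Even (n + 1) ∧ ∀ k : Fin (n + 2), idx k = idx k.rev
    · obtain ⟨⟨m, hm⟩, hpal⟩ := hp
      have hm2 : n + 2 = 2 * m + 1 := by omega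
      have hm1 : 0 < m := by omega
      rw [List.ofFn_congr hm2 f]
      have key := h3 m (fun i => idx (Fin.cast hm2.symm i))
        (fun i => f (Fin.cast hm2.symm i))
        (by
          intro k
          show idx (Fin.cast hm2.symm k.castSucc) ≠ idx (Fin.cast hm2.symm k.succ)
          have hk : (Fin.cast hm2.symm k.castSucc) =
              (⟨k.val, by omega⟩ : Fin (n + 1)).castSucc := by
            apply Fin.ext; simp
          have hk' : (Fin.cast hm2.symm k.succ) =
              (⟨k.val, by omega⟩ : Fin (n + 1)).succ := by
            apply Fin.ext; simp
          rw [hk, hk']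
          exact halt ⟨k.val, by omega⟩)
        (fun k => hmemU _) (fun k => hcentf _)
        (by
          intro k
          show idx (Fin.cast hm2.symm k) = idx (Fin.cast hm2.symm k.rev)
          have hk : (Fin.cast hm2.symm k).rev = Fin.cast hm2.symm k.rev := by
            apply Fin.ext
            simp only [Fin.val_rev, Fin.coe_cast]
            omega
          rw [← hk]
          exact hpal (Fin.cast hm2.symm k))
      rw [key, Finset.prod_eq_zero (Finset.mem_univ (⟨0, hm1⟩ : Fin m))
        (hφF _ (hFmulR _ _ (hFj _ _ (hmem _)))), zero_mul]
    · exact h2 (n + 1) idx f halt hmemU hcentf hp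

end TypeBPrime
end

section
/- Let (A_i)_{i∈I} be unital subalgebras of A, (F_i)_{i∈I} subalgebras of F, and P ∈ F with Φ(P) ≠ 0. Assume that (A_i)_{i∈I} are free with respect to φ and that the pair (⟨A_i : i∈I⟩, ⟨{P} ∪ ⋃_{i∈I} F_i⟩) of generated subalgebras is cyclic-antimonotone independent. Then for every n ≥ 1, every (i₁, …, iₙ) ∈ Iⁿ with i₁ ≠ i₂, …, i_{n−1} ≠ iₙ, and every choice of elements b_j = a_j + F_j with a_j ∈ A_{i_j}, F_j ∈ A_{i_j}⟨F_{i_j}⟩₀ and φ(b_j) = 0 (equivalently φ(a_j) = 0), one has φ_P(b₁ b₂ ⋯ bₙ) = φ_P(F₁ F₂ ⋯ Fₙ). -/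
open scoped BigOperators

namespace TypeBPrime

variable {B : Type*} [Ring B] [Algebra ℂ B]

section AuxProofs

variable {ι : Type*} (Ai : ι → Subalgebra ℂ B) (φ : B →ₗ[ℂ] ℂ)

/-- A centered alternating word, as a list of (index, element) pairs. -/
def CW (cw : List (ι × B)) : Prop :=
  List.IsChain (fun p q => p.1 ≠ q.1) cw ∧ ∀ p ∈ cw, p.2 ∈ Ai p.1 ∧ φ p.2 = 0

lemma H1 (hfree : IsFreeFamily ⇑φ fun i => (Ai i : Set B))
    (cw : List (ι × B)) (hcw : CW Ai φ cw) (hne : cw ≠ []) :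
    φ (cw.map Prod.snd).prod = 0 := by
  obtain ⟨hd, tl, rfl⟩ := List.exists_cons_of_ne_nil hne
  have hlen : (hd :: tl).length = tl.length + 1 := rfl
  have key := hfree tl.length (fun k => ((hd :: tl).get (Fin.cast hlen.symm k)).1)
      (fun k => ((hd :: tl).get (Fin.cast hlen.symm k)).2)
      ?_ ?_ ?_
  · have : List.ofFn (fun k : Fin (tl.length + 1) =>
        ((hd :: tl).get (Fin.cast hlen.symm k)).2) = ((hd :: tl).map Prod.snd) := by
      have : ((hd :: tl).map Prod.snd) = List.ofFn (Prod.snd ∘ (hd :: tl).get) := by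
        rw [← List.map_ofFn, List.ofFn_get]
      rw [this]
      rfl
    rwa [this] at key
  · intro k
    have h := (List.isChain_iff_getElem.mp hcw.1) k.val (by simp)
    intro e
    exact h e
  · intro k
    exact (hcw.2 _ (List.get_mem _ _)).1
  · intro k
    exact (hcw.2 _ (List.get_mem _ _)).2

lemma phi_smul_one (hφ1 : φ 1 = 1) (c : ℂ) : φ (c • (1:B)) = c := by
  rw [map_smul, hφ1, smul_eq_mul, mul_one]

lemma cent_mem {j : ι} {x : B} (hx : x ∈ Ai j) : x - φ x • 1 ∈ Ai j :=
  sub_mem hx (Subalgebra.smul_mem _ (one_mem _) _)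

lemma cent_phi (hφ1 : φ 1 = 1) (x : B) : φ (x - φ x • 1) = 0 := by
  rw [map_sub, phi_smul_one φ hφ1, sub_self]

/-- `φ (w * v) = 0` for a nonempty centered alternating word `w` and `v` from an
algebra whose index differs from the last index of the word. -/
lemma H2R (hfree : IsFreeFamily ⇑φ fun i => (Ai i : Set B)) (hφ1 : φ 1 = 1)
    (cw : List (ι × B)) (hcw : CW Ai φ cw) (hne : cw ≠ []) {j : ι} {v : B}
    (hv : v ∈ Ai j) (hlast : ∀ p, cw.getLast? = some p → j ≠ p.1) :
    φ ((cw.map Prod.snd).prod * v) = 0 := by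
  have hcw' : CW Ai φ (cw ++ [(j, v - φ v • 1)]) := by
    constructor
    · rw [List.isChain_append]
      refine ⟨hcw.1, List.isChain_singleton _, ?_⟩
      intro x hx y hy
      simp only [List.head?_cons, Option.mem_def, Option.some.injEq] at hy
      subst hy
      exact fun e => hlast x hx (e ▸ rfl)
    · intro p hp
      rcases List.mem_append.mp hp with h | h
      · exact hcw.2 p h
      · simp only [List.mem_singleton] at h
        subst h
        exact ⟨cent_mem Ai φ hv, cent_phi φ hφ1 v⟩
  have e : (cw.map Prod.snd).prod * v =
      ((cw ++ [(j, v - φ v • 1)]).map Prod.snd).prod + φ v • (cw.map Prod.snd).prod := by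
    rw [List.map_append, List.prod_append]
    simp [mul_sub, mul_smul_comm]
  rw [e, map_add, map_smul, H1 Ai φ hfree _ hcw' (by simp), H1 Ai φ hfree _ hcw hne]
  simp

/-- `φ (u * w) = 0` for a nonempty centered alternating word `w` and `u` from an
algebra whose index differs from the first index of the word. -/
lemma H2L (hfree : IsFreeFamily ⇑φ fun i => (Ai i : Set B)) (hφ1 : φ 1 = 1)
    (cw : List (ι × B)) (hcw : CW Ai φ cw) (hne : cw ≠ []) {j : ι} {u : B}
    (hu : u ∈ Ai j) (hhead : ∀ q, cw.head? = some q → j ≠ q.1) :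
    φ (u * (cw.map Prod.snd).prod) = 0 := by
  have hcw' : CW Ai φ ((j, u - φ u • 1) :: cw) := by
    constructor
    · rw [List.isChain_cons]
      exact ⟨fun y hy => hhead y hy, hcw.1⟩
    · intro p hp
      rcases List.mem_cons.mp hp with h | h
      · subst h; exact ⟨cent_mem Ai φ hu, cent_phi φ hφ1 u⟩
      · exact hcw.2 p h
  have e : u * (cw.map Prod.snd).prod =
      (((j, u - φ u • 1) :: cw).map Prod.snd).prod + φ u • (cw.map Prod.snd).prod := by
    simp [sub_mul, smul_mul_assoc]
  rw [e, map_add, map_smul, H1 Ai φ hfree _ hcw' (by simp), H1 Ai φ hfree _ hcw hne]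
  simp

lemma H3 (hfree : IsFreeFamily ⇑φ fun i => (Ai i : Set B)) (hφ1 : φ 1 = 1)
    (cw : List (ι × B)) (hcw : CW Ai φ cw) (hne : cw ≠ []) {j j' : ι} {u v : B}
    (hu : u ∈ Ai j) (hhead : ∀ q, cw.head? = some q → j ≠ q.1)
    (hv : v ∈ Ai j') (hlast : ∀ p, cw.getLast? = some p → j' ≠ p.1) :
    φ (u * (cw.map Prod.snd).prod * v) = 0 := by
  have hcw' : CW Ai φ ((j, u - φ u • 1) :: cw) := by
    constructor
    · rw [List.isChain_cons]
      exact ⟨fun y hy => hhead y hy, hcw.1⟩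
    · intro p hp
      rcases List.mem_cons.mp hp with h | h
      · subst h; exact ⟨cent_mem Ai φ hu, cent_phi φ hφ1 u⟩
      · exact hcw.2 p h
  have hlast' : ∀ p, ((j, u - φ u • 1) :: cw).getLast? = some p → j' ≠ p.1 := by
    obtain ⟨hd, tl, rfl⟩ := List.exists_cons_of_ne_nil hne
    intro p hp
    rw [List.getLast?_cons_cons] at hp
    exact hlast p hp
  have e : u * (cw.map Prod.snd).prod * v =
      ((((j, u - φ u • 1) :: cw).map Prod.snd).prod) * v +
        φ u • ((cw.map Prod.snd).prod * v) := by
    simp [sub_mul, smul_mul_assoc]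
  rw [e, map_add, map_smul,
    H2R Ai φ hfree hφ1 _ hcw' (by simp) hv hlast',
    H2R Ai φ hfree hφ1 _ hcw hne hv hlast]
  simp
/-- `a₀ * (f₁ * (a₁ * (f₂ * ⋯ * t)))` for pairs `(aᵢ₋₁, fᵢ)`. -/
def wprodAux : List (B × B) → B → B
  | [], t => t
  | p :: r, t => p.1 * (p.2 * wprodAux r t)

lemma wprodAux_eq (l : List (B × B)) (t : B) :
    wprodAux l t = (l.map fun p => p.1 * p.2).prod * t := by
  induction l with
  | nil => simp [wprodAux]
  | cons p r ih => simp [wprodAux, ih, mul_assoc]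

lemma altWord_wprod : ∀ (n : ℕ) (a : Fin (n + 1) → B) (f : Fin n → B),
    altWord a f = wprodAux (List.ofFn fun k : Fin n => (a k.castSucc, f k)) (a (Fin.last n)) := by
  intro n
  induction n with
  | zero => intro a f; simp [altWord, wprodAux, Fin.last]
  | succ n ih =>
    intro a f
    have h1 : altWord a f =
        a 0 * ((f 0 * a (Fin.succ 0)) * (List.ofFn fun k : Fin n => f k.succ * a k.succ.succ).prod) := by
      rw [altWord, List.ofFn_succ, List.prod_cons]
    have h2 : (List.ofFn fun k : Fin (n + 1) => (a k.castSucc, f k)) =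
        (a 0, f 0) :: List.ofFn fun k : Fin n => ((a ∘ Fin.succ) k.castSucc, (f ∘ Fin.succ) k) := by
      rw [List.ofFn_succ, Fin.castSucc_zero]
      congr 1
    have h3 := ih (a ∘ Fin.succ) (f ∘ Fin.succ)
    have h4 : (a ∘ Fin.succ) (Fin.last n) = a (Fin.last (n + 1)) := by
      simp [Fin.succ_last]
    rw [h1, h2]
    simp only [wprodAux]
    rw [← h4, ← h3]
    simp [altWord, Function.comp, mul_assoc]

variable (Φ : B →ₗ[ℂ] ℂ)

lemma cam_zero {SA SF : Set B} (hcam : CyclicAntimonotone ⇑φ ⇑Φ SA SF)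
    (q : B × B) (r : List (B × B)) (t : B)
    (hmem : ∀ p ∈ q :: r, p.1 ∈ SA ∧ p.2 ∈ SF) (ht : t ∈ SA)
    (hz : φ (q.1 * t) = 0 ∨ ∃ p ∈ r, φ p.1 = 0) :
    Φ (wprodAux (q :: r) t) = 0 := by
  set aF : Fin (r.length + 2) → B := fun k => ((q :: r).map Prod.fst).getD k.val t with haF
  set fF : Fin (r.length + 1) → B := fun k => ((q :: r).map Prod.snd).getD k.val 1 with hfF
  have hofn : (List.ofFn fun k : Fin (r.length + 1) => (aF k.castSucc, fF k)) = q :: r := by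
    apply List.ext_get (by simp)
    intro i h1 h2
    rw [List.get_ofFn]
    simp only [haF, hfF]
    rw [List.getD_eq_getElem _ _ (by simpa using h2), List.getD_eq_getElem _ _ (by simpa using h2),
      List.getElem_map, List.getElem_map]
    rfl
  have halast : aF (Fin.last (r.length + 1)) = t := by
    simp only [haF]
    exact List.getD_eq_default _ _ (by simp)
  have heq : wprodAux (q :: r) t = altWord aF fF := by
    have := altWord_wprod (r.length + 1) aF fF
    rw [hofn, halast] at this
    exact this.symm
  have hamem : ∀ k, aF k ∈ SA := by
    intro k
    by_cases h : (k : ℕ) < r.length + 1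
    · simp only [haF]
      rw [List.getD_eq_getElem _ _ (by simpa using h), List.getElem_map]
      exact (hmem _ (List.getElem_mem _)).1
    · simp only [haF]
      rw [List.getD_eq_default _ _ (by simpa using h)]
      exact ht
  have hfmem : ∀ k, fF k ∈ SF := by
    intro k
    simp only [hfF]
    rw [List.getD_eq_getElem _ _ (by simpa using k.isLt), List.getElem_map]
    exact (hmem _ (List.getElem_mem _)).2
  rw [heq, hcam (r.length + 1) (by omega) aF fF hamem hfmem]
  have ha0 : aF 0 = q.1 := rfl
  rcases hz with h | ⟨p, hp, hp0⟩
  · rw [halast, ha0, h, zero_mul, zero_mul]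
  · obtain ⟨⟨i, hi⟩, hpi⟩ := List.mem_iff_get.mp hp
    have hk : (⟨i + 1, by omega⟩ : Fin (r.length + 2)) ∈
        Finset.Ioo (0 : Fin (r.length + 2)) (Fin.last (r.length + 1)) := by
      rw [Finset.mem_Ioo]
      constructor
      · rw [Fin.lt_def]
        simp
      · rw [Fin.lt_def]
        simp [Fin.last]
        omega
    have hφk : φ (aF ⟨i + 1, by omega⟩) = 0 := by
      simp only [haF]
      rw [List.getD_eq_getElem _ _ (by simp; omega), List.getElem_map]
      have h5 : (q :: r)[i + 1]'(by simp; omega) = r.get ⟨i, hi⟩ := rfl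
      rw [h5, hpi]
      exact hp0
    rw [Finset.prod_eq_zero hk hφk, mul_zero, zero_mul]
/-! ### Block machinery -/

def blkProd : ι × (B ⊕ (B × B × List (B × B) × B)) → B
  | (_, Sum.inl x) => x
  | (_, Sum.inr (b₀, f₁, mid, t')) => b₀ * f₁ * (mid.map fun p => p.1 * p.2).prod * t'

def blkPure : ι × (B ⊕ (B × B × List (B × B) × B)) → Bool
  | (_, Sum.inl _) => true
  | (_, Sum.inr _) => false

def stepB : List (B × B) × B → ι × (B ⊕ (B × B × List (B × B) × B)) → List (B × B) × B
  | (l, t), (_, Sum.inl x) => (l, t * x)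
  | (l, t), (_, Sum.inr (b₀, f₁, mid, t')) => (l ++ (t * b₀, f₁) :: mid, t')

variable (Fi : ι → NonUnitalSubalgebra ℂ B)

def blkValid : ι × (B ⊕ (B × B × List (B × B) × B)) → Prop
  | (i, Sum.inl x) => x ∈ Ai i ∧ φ x = 0
  | (i, Sum.inr (b₀, f₁, mid, t')) =>
      b₀ ∈ Ai i ∧ f₁ ∈ Fi i ∧ (∀ p ∈ mid, p.1 ∈ Ai i ∧ p.2 ∈ Fi i) ∧ t' ∈ Ai i

def BlocksOK : Option ι → List (ι × (B ⊕ (B × B × List (B × B) × B))) → Prop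
  | _, [] => True
  | ip, b :: r => blkValid Ai φ Fi b ∧ (∀ j, ip = some j → b.1 ≠ j) ∧ BlocksOK (some b.1) r

def OpenSt (ip : Option ι) (forced : Bool) (t : B) : Prop :=
  ∃ u : B, ∃ cw : List (ι × B),
    t = u * (cw.map Prod.snd).prod ∧
    CW Ai φ cw ∧
    (∀ p, cw.getLast? = some p → ip = some p.1) ∧
    (u = 1 ∨ ∃ j, u ∈ Ai j ∧ (∀ q, cw.head? = some q → j ≠ q.1) ∧ (cw = [] → ip = some j)) ∧
    (forced = true → cw ≠ [])

lemma openSt_init : OpenSt Ai φ (none : Option ι) false (1 : B) := by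
  refine ⟨1, [], by simp, ⟨List.isChain_nil, by simp⟩, by simp, Or.inl rfl, by simp⟩

lemma openSt_mem {SA' : Subalgebra ℂ B} (hSA : ∀ i, Ai i ≤ SA')
    {ip : Option ι} {forced : Bool} {t : B} (h : OpenSt Ai φ ip forced t) : t ∈ SA' := by
  obtain ⟨u, cw, rfl, hcw, -, hu, -⟩ := h
  have h1 : u ∈ SA' := by
    rcases hu with rfl | ⟨j, hj, -, -⟩
    · exact one_mem _
    · exact hSA j hj
  refine mul_mem h1 (list_prod_mem ?_)
  intro x hx
  obtain ⟨p, hp, rfl⟩ := List.mem_map.mp hx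
  exact hSA p.1 (hcw.2 p hp).1

lemma openSt_phi (hfree : IsFreeFamily ⇑φ fun i => (Ai i : Set B)) (hφ1 : φ 1 = 1)
    {ip : Option ι} {t : B} (h : OpenSt Ai φ ip true t) : φ t = 0 := by
  obtain ⟨u, cw, rfl, hcw, hlast, hu, hne⟩ := h
  have hne' := hne rfl
  rcases hu with rfl | ⟨j, hj, hhead, -⟩
  · rw [one_mul]
    exact H1 Ai φ hfree cw hcw hne'
  · exact H2L Ai φ hfree hφ1 cw hcw hne' hj hhead

lemma openSt_phi_mul (hfree : IsFreeFamily ⇑φ fun i => (Ai i : Set B)) (hφ1 : φ 1 = 1)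
    {ip : Option ι} {t : B} (h : OpenSt Ai φ ip true t) {i : ι} {v : B}
    (hv : v ∈ Ai i) (hip : ∀ j, ip = some j → i ≠ j) : φ (t * v) = 0 := by
  obtain ⟨u, cw, rfl, hcw, hlast, hu, hne⟩ := h
  have hne' := hne rfl
  have hlast' : ∀ p, cw.getLast? = some p → i ≠ p.1 := by
    intro p hp
    exact hip p.1 (hlast p hp)
  rcases hu with rfl | ⟨j, hj, hhead, -⟩
  · rw [one_mul]
    exact H2R Ai φ hfree hφ1 cw hcw hne' hv hlast'
  · exact H3 Ai φ hfree hφ1 cw hcw hne' hj hhead hv hlast'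

lemma openSt_extend {ip : Option ι} {forced : Bool} {t : B}
    (h : OpenSt Ai φ ip forced t) {i : ι} {x : B} (hx : x ∈ Ai i) (hx0 : φ x = 0)
    (hip : ∀ j, ip = some j → i ≠ j) : OpenSt Ai φ (some i) true (t * x) := by
  obtain ⟨u, cw, rfl, hcw, hlast, hu, -⟩ := h
  refine ⟨u, cw ++ [(i, x)], ?_, ?_, ?_, ?_, fun _ => by simp⟩
  · rw [List.map_append, List.prod_append]
    simp [mul_assoc]
  · constructor
    · rw [List.isChain_append]
      refine ⟨hcw.1, List.isChain_singleton _, ?_⟩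
      intro p hp y hy
      simp only [List.head?_cons, Option.mem_def, Option.some.injEq] at hy
      subst hy
      exact fun e => hip p.1 (hlast p hp) (e ▸ rfl)
    · intro p hp
      rcases List.mem_append.mp hp with h' | h'
      · exact hcw.2 p h'
      · simp only [List.mem_singleton] at h'
        subst h'
        exact ⟨hx, hx0⟩
  · intro p hp
    rw [List.getLast?_concat] at hp
    cases hp
    rfl
  · rcases hu with rfl | ⟨j, hj, hhead, hemp⟩
    · exact Or.inl rfl
    · refine Or.inr ⟨j, hj, ?_, by simp⟩
      cases cw with
      | nil =>
        intro q hq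
        simp only [List.nil_append, List.head?_cons, Option.some.injEq] at hq
        subst hq
        exact fun e => hip j (hemp rfl) e.symm
      | cons q' cw' =>
        intro q hq
        simp only [List.cons_append, List.head?_cons, Option.some.injEq] at hq
        subst hq
        exact hhead _ rfl

lemma openSt_fresh {i : ι} {t' : B} (ht' : t' ∈ Ai i) : OpenSt Ai φ (some i) false t' := by
  refine ⟨t', [], by simp, ⟨List.isChain_nil, by simp⟩, by simp, ?_, by simp⟩
  exact Or.inr ⟨i, ht', by simp, fun _ => rfl⟩
lemma stepB_prod (acc : List (B × B) × B) (b : ι × (B ⊕ (B × B × List (B × B) × B))) :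
    ((stepB acc b).1.map fun p => p.1 * p.2).prod * (stepB acc b).2 =
      (acc.1.map fun p => p.1 * p.2).prod * acc.2 * blkProd b := by
  obtain ⟨l, t⟩ := acc
  obtain ⟨i, x | ⟨b₀, f₁, mid, t'⟩⟩ := b
  · simp [stepB, blkProd, mul_assoc]
  · simp [stepB, blkProd, List.map_append, List.prod_append, mul_assoc]

lemma foldl_prod (bl : List (ι × (B ⊕ (B × B × List (B × B) × B)))) : ∀ acc : List (B × B) × B,
    ((bl.foldl stepB acc).1.map fun p => p.1 * p.2).prod * (bl.foldl stepB acc).2 =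
      (acc.1.map fun p => p.1 * p.2).prod * acc.2 * (bl.map blkProd).prod := by
  induction bl with
  | nil => intro acc; simp
  | cons b r ih =>
    intro acc
    rw [List.foldl_cons, ih (stepB acc b), stepB_prod]
    simp [mul_assoc]

lemma mainInd {SA' : Subalgebra ℂ B} {SF : Set B}
    (hfree : IsFreeFamily ⇑φ fun i => (Ai i : Set B)) (hφ1 : φ 1 = 1)
    (hSA : ∀ i, Ai i ≤ SA') (hSF : ∀ i, (Fi i : Set B) ⊆ SF) :
    ∀ (bl : List (ι × (B ⊕ (B × B × List (B × B) × B)))) (ip : Option ι)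
      (l : List (B × B)) (t : B) (forced : Bool),
      BlocksOK Ai φ Fi ip bl →
      (∀ p ∈ l, p.1 ∈ SA' ∧ p.2 ∈ SF) → t ∈ SA' →
      ((∃ p ∈ l, φ p.1 = 0) ∨ OpenSt Ai φ ip forced t) →
      (∀ p ∈ (bl.foldl stepB (l, t)).1, p.1 ∈ SA' ∧ p.2 ∈ SF) ∧
        (bl.foldl stepB (l, t)).2 ∈ SA' ∧
        ((∃ p ∈ (bl.foldl stepB (l, t)).1, φ p.1 = 0) ∨
          ∃ ip', OpenSt Ai φ ip' (forced || bl.any blkPure) (bl.foldl stepB (l, t)).2) := by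
  intro bl
  induction bl with
  | nil =>
    intro ip l t forced _ hl ht hst
    refine ⟨hl, ht, ?_⟩
    rcases hst with h | h
    · exact Or.inl h
    · exact Or.inr ⟨ip, by simpa using h⟩
  | cons b r ih =>
    intro ip l t forced hok hl ht hst
    obtain ⟨hv, hip, hrest⟩ := hok
    obtain ⟨i, x | ⟨b₀, f₁, mid, t'⟩⟩ := b
    · -- pure letter
      obtain ⟨hx, hx0⟩ := hv
      have hstep : stepB (l, t) (i, Sum.inl x) = (l, t * x) := rfl
      rw [List.foldl_cons, hstep]
      have hst1 : (∃ p ∈ l, φ p.1 = 0) ∨ OpenSt Ai φ (some i) true (t * x) := by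
        rcases hst with h | h
        · exact Or.inl h
        · exact Or.inr (openSt_extend Ai φ h hx hx0 (fun j hj => hip j hj))
      have := ih (some i) l (t * x) true hrest hl (mul_mem ht (hSA i hx)) hst1
      refine ⟨this.1, this.2.1, ?_⟩
      have hb : (forced || (List.any ((i, Sum.inl x) :: r) blkPure)) =
          (true || List.any r blkPure) := by
        simp [blkPure]
      rw [hb]
      exact this.2.2
    · -- word letter
      obtain ⟨hb₀, hf₁, hmid, ht'⟩ := hv
      have hstep : stepB (l, t) (i, Sum.inr (b₀, f₁, mid, t')) =
          (l ++ (t * b₀, f₁) :: mid, t') := rfl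
      rw [List.foldl_cons, hstep]
      have hl1 : ∀ p ∈ l ++ (t * b₀, f₁) :: mid, p.1 ∈ SA' ∧ p.2 ∈ SF := by
        intro p hp
        rcases List.mem_append.mp hp with h' | h'
        · exact hl p h'
        · rcases List.mem_cons.mp h' with h'' | h''
          · subst h''
            exact ⟨mul_mem ht (hSA i hb₀), hSF i hf₁⟩
          · exact ⟨hSA i (hmid p h'').1, hSF i (hmid p h'').2⟩
      have hst1 : (∃ p ∈ l ++ (t * b₀, f₁) :: mid, φ p.1 = 0) ∨
          OpenSt Ai φ (some i) forced t' := by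
        rcases hst with h | h
        · obtain ⟨p, hp, hp0⟩ := h
          exact Or.inl ⟨p, List.mem_append_left _ hp, hp0⟩
        · obtain ⟨u, cw, he, hcw, hlast, hu, hforced⟩ := h
          cases cw with
          | nil =>
            have hfor : forced = false := by
              cases forced
              · rfl
              · exact absurd rfl (hforced rfl)
            subst hfor
            exact Or.inr (openSt_fresh Ai φ ht')
          | cons q' cw' =>
            have hopen : OpenSt Ai φ ip true t :=
              ⟨u, q' :: cw', he, hcw, hlast, hu, fun _ => List.cons_ne_nil _ _⟩
            have hz : φ (t * b₀) = 0 :=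
              openSt_phi_mul Ai φ hfree hφ1 hopen hb₀ (fun j hj => hip j hj)
            exact Or.inl ⟨(t * b₀, f₁), List.mem_append_right _ (List.mem_cons_self), hz⟩
      have := ih (some i) (l ++ (t * b₀, f₁) :: mid) t' forced hrest hl1 (hSA i ht') hst1
      refine ⟨this.1, this.2.1, ?_⟩
      have hb : (forced || (List.any ((i, Sum.inr (b₀, f₁, mid, t')) :: r) blkPure)) =
          (forced || List.any r blkPure) := by
        simp [blkPure]
      rw [hb]
      exact this.2.2
def shiftP : B → List (B × B) → List (B × B) × B
  | x, [] => ([], x)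
  | x, p :: r => ((x, p.1) :: (shiftP p.2 r).1, (shiftP p.2 r).2)

lemma shiftP_prod : ∀ (L : List (B × B)) (x : B),
    x * (L.map fun p => p.1 * p.2).prod =
      ((shiftP x L).1.map fun p => p.1 * p.2).prod * (shiftP x L).2 := by
  intro L
  induction L with
  | nil => intro x; simp [shiftP]
  | cons p r ih =>
    intro x
    simp only [shiftP, List.map_cons, List.prod_cons]
    rw [mul_assoc (x * p.1), ← ih p.2]
    simp [mul_assoc]

lemma shiftP_mem {i : ι} : ∀ (L : List (B × B)) (x : B),
    (∀ p ∈ L, p.1 ∈ Fi i ∧ p.2 ∈ Ai i) → x ∈ Ai i →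
    (∀ p ∈ (shiftP x L).1, p.1 ∈ Ai i ∧ p.2 ∈ Fi i) ∧ (shiftP x L).2 ∈ Ai i := by
  intro L
  induction L with
  | nil => intro x _ hx; exact ⟨by simp [shiftP], by simpa [shiftP] using hx⟩
  | cons p r ih =>
    intro x hL hx
    have hp := hL p (List.mem_cons_self)
    have hr := ih p.2 (fun q hq => hL q (List.mem_cons_of_mem _ hq)) hp.2
    constructor
    · intro q hq
      rcases List.mem_cons.mp hq with h' | h'
      · subst h'
        exact ⟨hx, hp.1⟩
      · exact hr.1 q h'
    · exact hr.2

lemma wordSet_data {i : ι} {g : B}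
    (hg : g ∈ wordSet (Ai i : Set B) (Fi i : Set B)) :
    ∃ d : B × B × List (B × B) × B,
      blkValid Ai φ Fi (i, Sum.inr d) ∧ g = blkProd (i, Sum.inr d) := by
  obtain ⟨n, hn, a, f, ha, hf, rfl⟩ := hg
  cases n with
  | zero => omega
  | succ m =>
    set L' : List (B × B) := List.ofFn fun k : Fin m => (f k.succ, a k.succ.succ) with hL'
    have hLmem : ∀ p ∈ L', p.1 ∈ Fi i ∧ p.2 ∈ Ai i := by
      intro p hp
      obtain ⟨k, rfl⟩ := List.mem_ofFn.mp hp
      exact ⟨hf _, ha _⟩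
    obtain ⟨hmid, ht'⟩ := shiftP_mem Ai Fi L' (a (Fin.succ 0)) hLmem (ha _)
    refine ⟨(a 0, f 0, (shiftP (a (Fin.succ 0)) L').1, (shiftP (a (Fin.succ 0)) L').2),
      ⟨ha 0, hf 0, hmid, ht'⟩, ?_⟩
    have hL : (List.ofFn fun k : Fin (m + 1) => f k * a k.succ) =
        (f 0 * a (Fin.succ 0)) :: (L'.map fun p => p.1 * p.2) := by
      rw [hL', List.map_ofFn, List.ofFn_succ]
      rfl
    show altWord a f = _
    simp only [blkProd]
    rw [altWord, hL, List.prod_cons, mul_assoc (f 0), shiftP_prod L' (a (Fin.succ 0))]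
    simp [mul_assoc]

lemma blocksOK_ofFn : ∀ (m : ℕ) (g : Fin m → ι × (B ⊕ (B × B × List (B × B) × B)))
    (ip : Option ι),
    (∀ k, blkValid Ai φ Fi (g k)) →
    (∀ j, ip = some j → ∀ h : 0 < m, (g ⟨0, h⟩).1 ≠ j) →
    (∀ (k : ℕ) (h : k + 1 < m), (g ⟨k, by omega⟩).1 ≠ (g ⟨k + 1, h⟩).1) →
    BlocksOK Ai φ Fi ip (List.ofFn g) := by
  intro m
  induction m with
  | zero =>
    intro g ip _ _ _
    rw [List.ofFn_zero]
    trivial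
  | succ m ih =>
    intro g ip hv h0 hadj
    rw [List.ofFn_succ]
    refine ⟨hv 0, ?_, ?_⟩
    · intro j hj
      have := h0 j hj (Nat.succ_pos m)
      have e : (⟨0, Nat.succ_pos m⟩ : Fin (m + 1)) = 0 := rfl
      rwa [e] at this
    · have := ih (fun k => g k.succ) (some (g 0).1) (fun k => hv k.succ) ?_ ?_
      · exact this
      · intro j hj h
        cases hj
        have := hadj 0 (by omega)
        have e : (⟨0, by omega⟩ : Fin (m + 1)) = 0 := rfl
        rw [e] at this
        exact fun e' => this (e' ▸ rfl)
      · intro k h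
        exact hadj (k + 1) (by omega)
lemma coreLemma {SA' : Subalgebra ℂ B} {SF : Set B}
    (hfree : IsFreeFamily ⇑φ fun i => (Ai i : Set B)) (hφ1 : φ 1 = 1)
    (hSA : ∀ i, Ai i ≤ SA') (hSF : ∀ i, (Fi i : Set B) ⊆ SF)
    (hcam : CyclicAntimonotone ⇑φ ⇑Φ (SA' : Set B) SF)
    {P : B} (hP : P ∈ SF) :
    ∀ (n : ℕ) (idx : Fin (n + 1) → ι) (c : Fin (n + 1) → B),
      (∀ k : Fin n, idx k.castSucc ≠ idx k.succ) →
      (∀ k, (c k ∈ Ai (idx k) ∧ φ (c k) = 0) ∨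
        c k ∈ wordSet (Ai (idx k) : Set B) (Fi (idx k) : Set B)) →
      (∃ k, c k ∈ Ai (idx k) ∧ φ (c k) = 0) →
      Φ (P * (List.ofFn c).prod) = 0 := by
  intro n idx c hadj hc hpure
  classical
  have hword : ∀ k, ¬(c k ∈ Ai (idx k) ∧ φ (c k) = 0) →
      ∃ d : B × B × List (B × B) × B,
        blkValid Ai φ Fi (idx k, Sum.inr d) ∧ c k = blkProd (idx k, Sum.inr d) :=
    fun k h => wordSet_data Ai φ Fi ((hc k).resolve_left h)
  set blockOf : Fin (n + 1) → ι × (B ⊕ (B × B × List (B × B) × B)) := fun k =>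
    if h : (c k ∈ Ai (idx k) ∧ φ (c k) = 0) then (idx k, Sum.inl (c k))
    else (idx k, Sum.inr (hword k h).choose) with hblockOf
  have hfst : ∀ k, (blockOf k).1 = idx k := by
    intro k
    by_cases h : (c k ∈ Ai (idx k) ∧ φ (c k) = 0) <;> simp [hblockOf, h]
  have hvalid : ∀ k, blkValid Ai φ Fi (blockOf k) := by
    intro k
    by_cases h : (c k ∈ Ai (idx k) ∧ φ (c k) = 0)
    · simp only [hblockOf, dif_pos h]
      exact h
    · simp only [hblockOf, dif_neg h]
      exact (hword k h).choose_spec.1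
  have hprod : ∀ k, blkProd (blockOf k) = c k := by
    intro k
    by_cases h : (c k ∈ Ai (idx k) ∧ φ (c k) = 0)
    · simp only [hblockOf, dif_pos h]
      rfl
    · simp only [hblockOf, dif_neg h]
      exact ((hword k h).choose_spec.2).symm
  set bl := List.ofFn blockOf with hbl
  have hok : BlocksOK Ai φ Fi none bl := by
    apply blocksOK_ofFn
    · exact hvalid
    · intro j hj
      cases hj
    · intro k h
      rw [hfst, hfst]
      exact hadj ⟨k, by omega⟩
  have hany : bl.any blkPure = true := by
    obtain ⟨k₀, hk₀⟩ := hpure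
    rw [List.any_eq_true]
    refine ⟨blockOf k₀, List.mem_ofFn.mpr ⟨k₀, rfl⟩, ?_⟩
    simp only [hblockOf, dif_pos hk₀]
    rfl
  obtain ⟨hmem, htmem, hst⟩ := mainInd Ai φ Fi hfree hφ1 hSA hSF bl none [] 1 false hok
    (by simp) (one_mem _) (Or.inr (openSt_init Ai φ))
  rw [hany] at hst
  have hzero : φ ((1, P).1 * (bl.foldl stepB ([], 1)).2) = 0 ∨
      ∃ p ∈ (bl.foldl stepB ([], 1)).1, φ p.1 = 0 := by
    rcases hst with h | ⟨ip', hOpen⟩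
    · exact Or.inr h
    · left
      show φ (1 * _) = 0
      rw [one_mul]
      exact openSt_phi Ai φ hfree hφ1 hOpen
  have hcz := cam_zero φ Φ hcam (1, P) (bl.foldl stepB ([], 1)).1 (bl.foldl stepB ([], 1)).2
    ?_ htmem hzero
  · have hprodeq : P * (List.ofFn c).prod =
        wprodAux ((1, P) :: (bl.foldl stepB ([], 1)).1) (bl.foldl stepB ([], 1)).2 := by
      have h1 : wprodAux ((1, P) :: (bl.foldl stepB ([], 1)).1) (bl.foldl stepB ([], 1)).2 =
          1 * (P * (((bl.foldl stepB ([], 1)).1.map fun p => p.1 * p.2).prod *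
            (bl.foldl stepB ([], 1)).2)) := by
        simp [wprodAux, wprodAux_eq, mul_assoc]
      rw [h1, foldl_prod]
      have h2 : bl.map blkProd = List.ofFn c := by
        rw [hbl, List.map_ofFn]
        exact congrArg List.ofFn (funext fun k => hprod k)
      rw [h2]
      simp
    rw [hprodeq]
    exact hcz
  · intro p hp
    rcases List.mem_cons.mp hp with h' | h'
    · subst h'
      exact ⟨one_mem SA', hP⟩
    · exact hmem p h'
lemma prod_mem_span_prods : ∀ (m : ℕ) (c : Fin m → B) (S : Fin m → Set B),
    (∀ k, c k ∈ Submodule.span ℂ (S k)) →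
    (List.ofFn c).prod ∈ Submodule.span ℂ
      {x : B | ∃ d : Fin m → B, (∀ k, d k ∈ S k) ∧ x = (List.ofFn d).prod} := by
  intro m
  induction m with
  | zero =>
    intro c S _
    apply Submodule.subset_span
    exact ⟨fun k => k.elim0, fun k => k.elim0, by simp⟩
  | succ m ih =>
    intro c S hc
    rw [List.ofFn_succ, List.prod_cons]
    have htail := ih (fun k => c k.succ) (fun k => S k.succ) (fun k => hc k.succ)
    have key : ∀ y ∈ Submodule.span ℂ {x : B | ∃ d : Fin m → B,
          (∀ k, d k ∈ S k.succ) ∧ x = (List.ofFn d).prod},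
        ∀ z ∈ Submodule.span ℂ (S 0),
          z * y ∈ Submodule.span ℂ {x : B | ∃ d : Fin (m + 1) → B,
            (∀ k, d k ∈ S k) ∧ x = (List.ofFn d).prod} := by
      intro y hy
      induction hy using Submodule.span_induction with
      | mem y hy =>
        intro z hz
        induction hz using Submodule.span_induction with
        | mem z hz =>
          apply Submodule.subset_span
          obtain ⟨d, hd, rfl⟩ := hy
          refine ⟨Fin.cons z d, ?_, ?_⟩
          · intro k
            refine Fin.cases ?_ ?_ k
            · simpa using hz
            · intro k'
              simpa using hd k'
          · rw [List.ofFn_succ, List.prod_cons]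
            simp
        | zero => rw [zero_mul]; exact zero_mem _
        | add z z' _ _ h1 h2 => rw [add_mul]; exact add_mem h1 h2
        | smul r z _ h1 => rw [smul_mul_assoc]; exact Submodule.smul_mem _ _ h1
      | zero => intro z hz; rw [mul_zero]; exact zero_mem _
      | add y y' _ _ h1 h2 =>
        intro z hz
        rw [mul_add]
        exact add_mem (h1 z hz) (h2 z hz)
      | smul r y _ h1 =>
        intro z hz
        rw [mul_smul_comm]
        exact Submodule.smul_mem _ _ (h1 z hz)
    exact key _ htail _ (hc 0)

lemma prod_add_expand : ∀ (m : ℕ) (x y : Fin m → B),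
    (List.ofFn fun k => x k + y k).prod =
      ∑ s : Fin m → Bool, (List.ofFn fun k => cond (s k) (y k) (x k)).prod := by
  intro m
  induction m with
  | zero =>
    intro x y
    simp
  | succ m ih =>
    intro x y
    have hsum : ∑ s : Fin (m + 1) → Bool, (List.ofFn fun k => cond (s k) (y k) (x k)).prod =
        ∑ bs : Bool × (Fin m → Bool),
          cond bs.1 (y 0) (x 0) *
            (List.ofFn fun k : Fin m => cond (bs.2 k) (y k.succ) (x k.succ)).prod := by
      rw [← Equiv.sum_comp (Fin.consEquiv (fun _ => Bool))]
      apply Finset.sum_congr rfl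
      intro bs _
      rw [List.ofFn_succ, List.prod_cons]
      simp [Fin.consEquiv_apply]
    rw [List.ofFn_succ, List.prod_cons, hsum, Fintype.sum_prod_type, Fintype.sum_bool]
    simp only [cond_true, cond_false]
    rw [← Finset.mul_sum, ← Finset.mul_sum, ← ih (fun k => x k.succ) (fun k => y k.succ)]
    rw [add_mul, add_comm]

lemma spanV {SA' : Subalgebra ℂ B} {SF : Set B}
    (hfree : IsFreeFamily ⇑φ fun i => (Ai i : Set B)) (hφ1 : φ 1 = 1)
    (hSA : ∀ i, Ai i ≤ SA') (hSF : ∀ i, (Fi i : Set B) ⊆ SF)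
    (hcam : CyclicAntimonotone ⇑φ ⇑Φ (SA' : Set B) SF)
    {P : B} (hP : P ∈ SF) :
    ∀ (n : ℕ) (idx : Fin (n + 1) → ι) (a g : Fin (n + 1) → B) (s : Fin (n + 1) → Bool),
      (∀ k : Fin n, idx k.castSucc ≠ idx k.succ) →
      (∀ k, a k ∈ Ai (idx k)) → (∀ k, φ (a k) = 0) →
      (∀ k, g k ∈ wordSpan (Ai (idx k) : Set B) (Fi (idx k) : Set B)) →
      (∃ k, s k = false) →
      Φ (P * (List.ofFn fun k => cond (s k) (g k) (a k)).prod) = 0 := by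
  intro n idx a g s hadj ha hφa hg hex
  have hS : ∀ k, cond (s k) (g k) (a k) ∈
      Submodule.span ℂ
        (cond (s k) (wordSet (Ai (idx k) : Set B) (Fi (idx k) : Set B)) {a k}) := by
    intro k
    cases hsk : s k
    · exact Submodule.mem_span_singleton_self _
    · exact hg k
  have hmem := prod_mem_span_prods (n + 1) _ _ hS
  have main : ∀ x ∈ Submodule.span ℂ {x : B | ∃ d : Fin (n + 1) → B,
      (∀ k, d k ∈ cond (s k) (wordSet (Ai (idx k) : Set B) (Fi (idx k) : Set B)) {a k}) ∧
        x = (List.ofFn d).prod}, Φ (P * x) = 0 := by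
    intro x hx
    induction hx using Submodule.span_induction with
    | mem x hx =>
      obtain ⟨d, hd, rfl⟩ := hx
      apply coreLemma Ai φ Φ Fi hfree hφ1 hSA hSF hcam hP n idx d hadj
      · intro k
        have hdk := hd k
        cases hsk : s k
        · rw [hsk] at hdk
          simp only [cond_false, Set.mem_singleton_iff] at hdk
          rw [hdk]
          exact Or.inl ⟨ha k, hφa k⟩
        · rw [hsk] at hdk
          exact Or.inr hdk
      · obtain ⟨k₀, hk₀⟩ := hex
        have hdk := hd k₀
        rw [hk₀] at hdk
        simp only [cond_false, Set.mem_singleton_iff] at hdk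
        refine ⟨k₀, ?_⟩
        rw [hdk]
        exact ⟨ha k₀, hφa k₀⟩
    | zero => simp
    | add x x' _ _ h1 h2 => rw [mul_add, map_add, h1, h2, add_zero]
    | smul r x _ h1 => rw [mul_smul_comm, map_smul, h1, smul_zero]
  exact main _ hmem

end AuxProofs

theorem statement8
    {B : Type*} [Ring B] [Algebra ℂ B]
    (A : Subalgebra ℂ B) (F : Submodule ℂ B)
    (hFmulL : ∀ b : B, ∀ f ∈ F, b * f ∈ F)
    (hFmulR : ∀ b : B, ∀ f ∈ F, f * b ∈ F)
    (hAF : ∀ x ∈ A, x ∈ F → x = 0)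
    (hdec : ∀ x : B, ∃ a ∈ A, ∃ f ∈ F, x = a + f)
    (φ Φ : B →ₗ[ℂ] ℂ)
    (hφ1 : φ 1 = 1) (hφF : ∀ f ∈ F, φ f = 0)
    {ι : Type*}
    (Ai : ι → Subalgebra ℂ B) (hAi : ∀ i, Ai i ≤ A)
    (Fi : ι → NonUnitalSubalgebra ℂ B) (hFi : ∀ i, ∀ f ∈ Fi i, f ∈ F)
    (P : B) (hP : P ∈ F) (hΦP : Φ P ≠ 0)
    (hfree : IsFreeFamily ⇑φ (fun i => (Ai i : Set B)))
    (hcam : CyclicAntimonotone ⇑φ ⇑Φ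
      (Algebra.adjoin ℂ (⋃ i, (Ai i : Set B)) : Set B)
      (NonUnitalAlgebra.adjoin ℂ ({P} ∪ ⋃ i, (Fi i : Set B)) : Set B)) :
    ∀ (n : ℕ) (idx : Fin (n + 1) → ι) (a g : Fin (n + 1) → B),
      (∀ k : Fin n, idx k.castSucc ≠ idx k.succ) →
      (∀ k, a k ∈ Ai (idx k)) →
      (∀ k, g k ∈ wordSpan (Ai (idx k) : Set B) (Fi (idx k) : Set B)) →
      (∀ k, φ (a k + g k) = 0) →
      Φ (P * (List.ofFn fun k => a k + g k).prod) / Φ P =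
        Φ (P * (List.ofFn g).prod) / Φ P := by
  intro n idx a g hadj ha hg hφ0
  have hSAle : ∀ i, Ai i ≤ Algebra.adjoin ℂ (⋃ i, (Ai i : Set B)) :=
    fun i x hx => Algebra.subset_adjoin (Set.mem_iUnion.mpr ⟨i, hx⟩)
  have hSFle : ∀ i, (Fi i : Set B) ⊆
      (NonUnitalAlgebra.adjoin ℂ ({P} ∪ ⋃ i, (Fi i : Set B)) : Set B) :=
    fun i x hx =>
      NonUnitalAlgebra.subset_adjoin ℂ (Set.mem_union_right _ (Set.mem_iUnion.mpr ⟨i, hx⟩))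
  have hPF : P ∈ (NonUnitalAlgebra.adjoin ℂ ({P} ∪ ⋃ i, (Fi i : Set B)) : Set B) :=
    NonUnitalAlgebra.subset_adjoin ℂ (Set.mem_union_left _ rfl)
  have hWS : ∀ i : ι, wordSet (Ai i : Set B) (Fi i : Set B) ⊆ (F : Set B) := by
    intro i x hx
    obtain ⟨nn, hnn, aa, ff, haa, hff, rfl⟩ := hx
    cases nn with
    | zero => omega
    | succ mm =>
      show aa 0 * (List.ofFn fun k => ff k * aa k.succ).prod ∈ F
      apply hFmulL
      rw [List.ofFn_succ, List.prod_cons]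
      exact hFmulR _ _ (hFmulR _ _ (hFi i _ (hff 0)))
  have hgF : ∀ k, g k ∈ F := by
    intro k
    exact (Submodule.span_le.mpr (hWS (idx k))) (hg k)
  have hφg : ∀ k, φ (g k) = 0 := fun k => hφF _ (hgF k)
  have hφa : ∀ k, φ (a k) = 0 := by
    intro k
    have h := hφ0 k
    rw [map_add, hφg k, add_zero] at h
    exact h
  have key : Φ (P * (List.ofFn fun k => a k + g k).prod) = Φ (P * (List.ofFn g).prod) := by
    have hmain : ∀ s : Fin (n + 1) → Bool, s ∈ Finset.univ →
        s ≠ (fun _ => true) →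
        Φ (P * (List.ofFn fun k => cond (s k) (g k) (a k)).prod) = 0 := by
      intro s _ hs
      have hex : ∃ k, s k = false := by
        by_contra hcon
        push_neg at hcon
        apply hs
        funext k
        cases hsk : s k
        · exact absurd hsk (hcon k)
        · rfl
      exact spanV Ai φ Φ Fi hfree hφ1 hSAle hSFle hcam hPF n idx a g s hadj ha hφa hg hex
    rw [prod_add_expand (n + 1) a g, Finset.mul_sum, map_sum,
      Finset.sum_eq_single (fun _ : Fin (n + 1) => true) hmain
        (fun h => absurd (Finset.mem_univ _) h)]
    rfl
  rw [key]

end TypeBPrime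
end

section
/- Let A₁ ⊆ A be a unital subalgebra and P ∈ F with Φ(P) ≠ 0, and suppose the pair (A₁, F_P) with F_P := {c Pⁿ : c ∈ ℂ, n ≥ 1} is cyclic-antimonotone independent. Then φ_P(a) = φ(a) for every a ∈ A₁. Consequently, if (A_i)_{i∈I} are unital subalgebras of A with ⟨A_i : i∈I⟩ ⊆ A₁, then (A_i)_{i∈I} are free with respect to φ if and only if (A_i)_{i∈I} are conditionally free with respect to (φ, φ_P). -/
open scoped BigOperators

namespace TypeBPrime

variable {B : Type*} [Ring B] [Algebra ℂ B]

theorem statement9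
    {B : Type*} [Ring B] [Algebra ℂ B]
    (A : Subalgebra ℂ B) (F : Submodule ℂ B)
    (hFmulL : ∀ b : B, ∀ f ∈ F, b * f ∈ F)
    (hFmulR : ∀ b : B, ∀ f ∈ F, f * b ∈ F)
    (hAF : ∀ x ∈ A, x ∈ F → x = 0)
    (hdec : ∀ x : B, ∃ a ∈ A, ∃ f ∈ F, x = a + f)
    (φ Φ : B →ₗ[ℂ] ℂ)
    (hφ1 : φ 1 = 1) (hφF : ∀ f ∈ F, φ f = 0)
    (A₁ : Subalgebra ℂ B) (hA₁A : A₁ ≤ A)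
    (P : B) (hP : P ∈ F) (hΦP : Φ P ≠ 0)
    (hcam : CyclicAntimonotone ⇑φ ⇑Φ (A₁ : Set B)
      {x | ∃ (c : ℂ) (n : ℕ), 0 < n ∧ x = c • P ^ n})
    {ι : Type*} (Ai : ι → Subalgebra ℂ B)
    (hAi : Algebra.adjoin ℂ (⋃ i, (Ai i : Set B)) ≤ A₁) :
    (∀ a ∈ A₁, Φ (P * a) / Φ P = φ a) ∧
      (IsFreeFamily ⇑φ (fun i => (Ai i : Set B)) ↔
        CFree ⇑φ (fun b => Φ (P * b) / Φ P) (fun i => (Ai i : Set B))) := by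

  have key : ∀ a ∈ A₁, Φ (P * a) = φ a * Φ P := by
    intro a ha
    have h := hcam 1 one_pos ![1, a] ![P] ?_ ?_
    · have hIoo : Finset.Ioo (0 : Fin 2) (1 : Fin 2) = ∅ := by decide
      simpa [altWord, List.ofFn_succ, hIoo, Fin.last, mul_assoc] using h
    · intro k
      fin_cases k
      · simpa using A₁.one_mem
      · simpa using ha
    · intro k
      fin_cases k
      exact ⟨1, 1, one_pos, by simp⟩
  have part1 : ∀ a ∈ A₁, Φ (P * a) / Φ P = φ a := by
    intro a ha
    rw [key a ha]
    field_simp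
  have memA₁ : ∀ i : ι, ∀ x ∈ Ai i, x ∈ A₁ := fun i x hx =>
    hAi (Algebra.subset_adjoin (Set.mem_iUnion.2 ⟨i, hx⟩))
  refine ⟨part1, ?_, fun h => h.1⟩
  intro hfree
  refine ⟨hfree, ?_⟩
  intro n idx b halt hmem hcent
  have hprodmem : (List.ofFn b).prod ∈ A₁ := by
    apply list_prod_mem
    intro x hx
    obtain ⟨k, rfl⟩ := List.mem_ofFn.1 hx
    exact memA₁ _ _ (hmem k)
  have h0 : φ (List.ofFn b).prod = 0 := hfree n idx b halt hmem hcent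
  dsimp only
  rw [part1 _ hprodmem, h0]
  symm
  apply Finset.prod_eq_zero (Finset.mem_univ (0 : Fin (n + 1)))
  rw [part1 _ (memA₁ _ _ (hmem 0)), hcent 0]


end TypeBPrime
end

section
/- Let (A_i)_{i∈I} be unital subalgebras of A, (F_i)_{i∈I} subalgebras of F, and P ∈ F with Φ(P) ≠ 0. Assume that (A_i)_{i∈I} are free with respect to φ, that the pair (⟨A_i : i∈I⟩, ⟨{P} ∪ ⋃_{i∈I} F_i⟩) of generated subalgebras is cyclic-antimonotone independent, and that the subalgebras (F_i)_{i∈I} are Boolean independent with respect to φ_P. Then the subalgebras (A_i⟨F_i⟩₀)_{i∈I} of F are Boolean independent with respect to φ_P. -/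
open scoped BigOperators

namespace TypeBPrime

variable {B : Type*} [Ring B] [Algebra ℂ B]

set_option linter.unusedSectionVars false

section Aux

variable {B : Type*} [Ring B] [Algebra ℂ B]

lemma listprod_mem_nus (S : NonUnitalSubalgebra ℂ B) :
    ∀ (l : List B) (x : B), x ∈ S → (∀ y ∈ l, y ∈ S) → (x :: l).prod ∈ S := by
  intro l
  induction l with
  | nil => intro x hx _; simpa using hx
  | cons y l ih =>
    intro x hx h
    rw [List.prod_cons]
    exact mul_mem hx (ih y (h y (by simp)) fun z hz => h z (by simp [hz]))

lemma ofFn_update_eq_set {n : ℕ} (c : Fin n → B) (K : Fin n) (x : B) :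
    List.ofFn (Function.update c K x) = (List.ofFn c).set K x := by
  apply List.ext_getElem
  · simp
  · intro i h1 h2
    simp only [List.getElem_ofFn, List.getElem_set, Function.update_apply]
    simp only [List.length_ofFn] at h1
    rcases eq_or_ne (⟨i, h1⟩ : Fin n) K with h | h
    · rw [if_pos h, if_pos (by rw [← h])]
    · rw [if_neg h, if_neg (fun hc => h (Fin.ext hc.symm))]

lemma gen_cons_snoc (m : ℕ) (q t : B) (u v : Fin m → B) :
    (List.ofFn fun k : Fin (m + 1) => Fin.cons q v k * Fin.snoc u t k).prod
      = q * ((List.ofFn fun j : Fin m => u j * v j).prod * t) := by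
  induction m generalizing q with
  | zero =>
    simp [List.ofFn_succ, Fin.snoc, List.ofFn_zero]
  | succ m ih =>
    rw [List.ofFn_succ, List.prod_cons]
    have hsnoc : ∀ k : Fin (m + 1), (Fin.snoc u t : Fin (m + 2) → B) k.succ
        = (Fin.snoc (fun j : Fin m => u j.succ) t : Fin (m + 1) → B) k := by
      intro k
      induction k using Fin.lastCases with
      | last => rw [Fin.succ_last, Fin.snoc_last, Fin.snoc_last]
      | cast j => rw [Fin.succ_castSucc, Fin.snoc_castSucc, Fin.snoc_castSucc]
    have htail : (fun k : Fin (m + 1) =>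
          (Fin.cons q v : Fin (m + 2) → B) k.succ
            * (Fin.snoc u t : Fin (m + 2) → B) k.succ)
        = fun k : Fin (m + 1) =>
          (Fin.cons (v 0) (fun j : Fin m => v j.succ) : Fin (m + 1) → B) k
            * (Fin.snoc (fun j : Fin m => u j.succ) t : Fin (m + 1) → B) k := by
      funext k
      rw [Fin.cons_succ, hsnoc]
      congr 1
      exact congrFun (Fin.cons_self_tail v).symm k
    rw [htail, ih]
    have hhead : (Fin.cons q v : Fin (m + 2) → B) 0
        * (Fin.snoc u t : Fin (m + 2) → B) 0 = q * u 0 := by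
      rw [Fin.cons_zero, show (0 : Fin (m + 2)) = Fin.castSucc 0 from rfl,
        Fin.snoc_castSucc]
    rw [hhead, List.ofFn_succ (f := fun j : Fin (m + 1) => u j * v j), List.prod_cons]
    simp [mul_assoc]

lemma alt_shift : ∀ (m : ℕ) (a : Fin (m + 1) → B) (f : Fin m → B),
    altWord a f
      = (List.ofFn fun k : Fin m => a k.castSucc * f k).prod * a (Fin.last m) := by
  intro m
  induction m with
  | zero => intro a f; simp [altWord, Fin.last]
  | succ m ih =>
    intro a f
    have h1 : altWord a f
        = a 0 * ((f 0 * a 1)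
            * (List.ofFn fun k : Fin m => f k.succ * a k.succ.succ).prod) := by
      rw [altWord, List.ofFn_succ, List.prod_cons]
      rfl
    have h2 := ih (fun j => a j.succ) (fun j => f j.succ)
    rw [altWord] at h2
    have h3 : a 0 * (f 0 * a 1 * (List.ofFn fun k : Fin m => f k.succ * a k.succ.succ).prod)
        = (a 0 * f 0)
            * (a 1 * (List.ofFn fun k : Fin m => f k.succ * a k.succ.succ).prod) := by
      simp [mul_assoc]
    rw [h1, h3]
    have h2' : a 1 * (List.ofFn fun k : Fin m => f k.succ * a k.succ.succ).prod
        = (List.ofFn fun k : Fin m => a k.castSucc.succ * f k.succ).prod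
            * a (Fin.last m).succ := by
      simpa using h2
    rw [h2']
    rw [List.ofFn_succ (f := fun k : Fin (m + 1) => a k.castSucc * f k), List.prod_cons]
    simp only [Fin.succ_castSucc, Fin.succ_last, Fin.castSucc_zero, mul_assoc]

lemma ofFn_get_map {α β : Type*} (L : List α) (g : α → β) :
    List.ofFn (fun j : Fin L.length => g (L.get j)) = L.map g := by
  conv_rhs => rw [← List.ofFn_get L]
  rw [List.map_ofFn]
  rfl

lemma free_pair {ι : Type*} (φ : B →ₗ[ℂ] ℂ) (hφ1 : φ 1 = 1)
    (Ai : ι → Subalgebra ℂ B)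
    (hfree : IsFreeFamily ⇑φ (fun i => (Ai i : Set B)))
    {i j : ι} (hij : i ≠ j) {x y : B} (hx : x ∈ Ai i) (hy : y ∈ Ai j) :
    φ (x * y) = φ x * φ y := by
  have hx0 : φ (x - φ x • 1) = 0 := by
    rw [map_sub, map_smul, hφ1, smul_eq_mul, mul_one, sub_self]
  have hy0 : φ (y - φ y • 1) = 0 := by
    rw [map_sub, map_smul, hφ1, smul_eq_mul, mul_one, sub_self]
  have h0 := hfree 1 ![i, j] ![x - φ x • 1, y - φ y • 1]
    (by intro k; fin_cases k; simpa using hij)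
    (by
      intro k; fin_cases k
      · simpa using sub_mem hx (SMulMemClass.smul_mem _ (one_mem _))
      · simpa using sub_mem hy (SMulMemClass.smul_mem _ (one_mem _)))
    (by
      intro k; fin_cases k
      · simpa using hx0
      · simpa using hy0)
  have hprod : (List.ofFn ![x - φ x • 1, y - φ y • 1]).prod
      = (x - φ x • 1) * (y - φ y • 1) := by
    simp [List.ofFn_succ]
  rw [hprod] at h0
  rw [sub_mul, mul_sub, mul_sub] at h0
  simp only [mul_smul_comm, smul_mul_assoc, mul_one, one_mul, smul_smul,
    map_sub, map_smul, smul_eq_mul, hφ1, mul_one] at h0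
  linear_combination h0

lemma Klist2 (φ Φ : B →ₗ[ℂ] ℂ) (A1 F1 : Set B) (h1A : (1 : B) ∈ A1)
    (P : B) (hPF : P ∈ F1)
    (hcam : CyclicAntimonotone ⇑φ ⇑Φ A1 F1)
    (L : List (B × B)) (t : B) (ht : t ∈ A1)
    (hL : ∀ p ∈ L, p.1 ∈ A1 ∧ p.2 ∈ F1) :
    Φ (P * (((L.map fun p => p.1 * p.2).prod) * t))
      = ((L.map fun p => φ p.1).prod * φ t) * Φ (P * (L.map Prod.snd).prod) := by
  set u : Fin L.length → B := fun j => (L.get j).1 with hu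
  set v : Fin L.length → B := fun j => (L.get j).2 with hv
  set a' : Fin (L.length + 2) → B := Fin.cons 1 (Fin.snoc u t) with ha'
  set f' : Fin (L.length + 1) → B := Fin.cons P v with hf'
  have hmem_a : ∀ k, a' k ∈ A1 := by
    intro k
    refine Fin.cases ?_ (fun j => ?_) k
    · simpa [ha'] using h1A
    · rw [ha']
      simp only [Fin.cons_succ]
      induction j using Fin.lastCases with
      | last => simpa [Fin.snoc_last] using ht
      | cast i => simpa [Fin.snoc_castSucc, hu] using (hL _ (L.get_mem ⟨i.1, i.2⟩)).1
  have hmem_f : ∀ k, f' k ∈ F1 := by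
    intro k
    refine Fin.cases ?_ (fun j => ?_) k
    · simpa [hf'] using hPF
    · simpa [hf', Fin.cons_succ, hv] using (hL _ (L.get_mem ⟨j.1, j.2⟩)).2
  have hcam' := hcam (L.length + 1) (Nat.succ_pos _) a' f' hmem_a hmem_f
  have e1 : altWord a' f' = P * (((L.map fun p => p.1 * p.2).prod) * t) := by
    rw [altWord]
    have h1 : (fun k : Fin (L.length + 1) => f' k * a' k.succ)
        = fun k : Fin (L.length + 1) =>
          (Fin.cons P v : Fin (L.length + 1) → B) k
            * (Fin.snoc u t : Fin (L.length + 1) → B) k := by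
      funext k
      rw [ha', hf', Fin.cons_succ]
    rw [h1, gen_cons_snoc]
    rw [show a' 0 = 1 from Fin.cons_zero _ _, one_mul]
    rw [← ofFn_get_map L (fun p => p.1 * p.2)]
  have h2 : a' (Fin.last (L.length + 1)) = t := by
    rw [ha', ← Fin.succ_last, Fin.cons_succ, Fin.snoc_last]
  have e2 : φ (a' 0 * a' (Fin.last (L.length + 1))) = φ t := by
    rw [show a' 0 = 1 from Fin.cons_zero _ _, h2, one_mul]
  have e3 : φ t
        * ∏ k ∈ Finset.Ioo (0 : Fin (L.length + 2)) (Fin.last (L.length + 1)), φ (a' k)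
      = (L.map fun p => φ p.1).prod * φ t := by
    have hnm : Fin.last (L.length + 1)
        ∉ Finset.Ioo (0 : Fin (L.length + 2)) (Fin.last (L.length + 1)) := by
      simp
    have hlt : (0 : Fin (L.length + 2)) < Fin.last (L.length + 1) := Fin.last_pos'
    have hIoc : Finset.Ioc (0 : Fin (L.length + 2)) (Fin.last (L.length + 1))
        = Finset.Ioi 0 := by
      ext x
      simp [Fin.le_last, Fin.pos_iff_ne_zero]
    calc φ t * ∏ k ∈ Finset.Ioo (0 : Fin (L.length + 2)) (Fin.last (L.length + 1)), φ (a' k)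
        = φ (a' (Fin.last (L.length + 1)))
            * ∏ k ∈ Finset.Ioo (0 : Fin (L.length + 2)) (Fin.last (L.length + 1)), φ (a' k) := by
          rw [h2]
      _ = ∏ k ∈ insert (Fin.last (L.length + 1))
            (Finset.Ioo (0 : Fin (L.length + 2)) (Fin.last (L.length + 1))), φ (a' k) := by
          rw [Finset.prod_insert hnm]
      _ = ∏ k ∈ Finset.Ioi (0 : Fin (L.length + 2)), φ (a' k) := by
          rw [Finset.Ioo_insert_right hlt, hIoc]
      _ = ∏ j : Fin (L.length + 1), φ (a' j.succ) := Fin.prod_Ioi_zero _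
      _ = ∏ j : Fin (L.length + 1), φ ((Fin.snoc u t : Fin (L.length + 1) → B) j) := by
          refine Finset.prod_congr rfl fun j _ => ?_
          rw [ha', Fin.cons_succ]
      _ = (∏ j : Fin L.length, φ (u j)) * φ t := by
          rw [Fin.prod_univ_castSucc]
          simp [Fin.snoc_castSucc, Fin.snoc_last]
      _ = (L.map fun p => φ p.1).prod * φ t := by
          rw [← ofFn_get_map L (fun p => φ p.1), List.prod_ofFn]
  have e4 : (List.ofFn f').prod = P * (L.map Prod.snd).prod := by
    rw [hf', List.ofFn_succ]
    simp only [Fin.cons_zero, Fin.cons_succ, List.prod_cons]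
    rw [← ofFn_get_map L Prod.snd]
  rw [e1, e4, e2] at hcam'
  rw [hcam', mul_assoc (φ t)]
  rw [← e3, mul_assoc]

lemma concat_struct {ι : Type*} (φ : B →ₗ[ℂ] ℂ)
    (Ai : ι → Subalgebra ℂ B) (Fi : ι → NonUnitalSubalgebra ℂ B)
    (A1 F1 : Set B)
    (hA1 : ∀ i, ∀ x ∈ Ai i, x ∈ A1) (hF1 : ∀ i, ∀ x ∈ Fi i, x ∈ F1)
    (hA1mul : ∀ x ∈ A1, ∀ y ∈ A1, x * y ∈ A1)
    (hfree2 : ∀ {i j : ι}, i ≠ j → ∀ {x y : B},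
      x ∈ Ai i → y ∈ Ai j → φ (x * y) = φ x * φ y) :
    ∀ (n : ℕ) (idx : Fin (n + 1) → ι) (c g tl : Fin (n + 1) → B) (α : Fin (n + 1) → ℂ),
    (∀ k : Fin n, idx k.castSucc ≠ idx k.succ) →
    (∀ k, ∃ (h : B × B) (M : List (B × B)),
       (∀ p ∈ (h :: M), p.1 ∈ Ai (idx k) ∧ p.2 ∈ Fi (idx k)) ∧
       tl k ∈ Ai (idx k) ∧
       c k = ((h :: M).map fun p => p.1 * p.2).prod * tl k ∧
       g k = ((h :: M).map Prod.snd).prod ∧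
       α k = ((h :: M).map fun p => φ p.1).prod * φ (tl k)) →
    ∃ (h : B × B) (L : List (B × B)),
       h.1 ∈ Ai (idx 0) ∧
       (∀ p ∈ (h :: L), p.1 ∈ A1 ∧ p.2 ∈ F1) ∧
       (List.ofFn c).prod = ((h :: L).map fun p => p.1 * p.2).prod * tl (Fin.last n) ∧
       ((h :: L).map fun p => φ p.1).prod * φ (tl (Fin.last n)) = ∏ k, α k ∧
       ((h :: L).map Prod.snd).prod = (List.ofFn g).prod := by
  intro n
  induction n with
  | zero =>
    intro idx c g tl α _ hrep
    obtain ⟨h, M, hmem, htl, hc, hg, hα⟩ := hrep 0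
    refine ⟨h, M, (hmem h (by simp)).1,
      fun p hp => ⟨hA1 _ _ (hmem p hp).1, hF1 _ _ (hmem p hp).2⟩, ?_, ?_, ?_⟩
    · simpa [List.ofFn_succ, Fin.last_zero] using hc
    · simp [Fin.prod_univ_one, hα, Fin.last_zero]
    · simp [List.ofFn_succ, hg]
  | succ n ih =>
    intro idx c g tl α halt hrep
    obtain ⟨h₀, M₀, hmem₀, htl₀, hc₀, hg₀, hα₀⟩ := hrep 0
    obtain ⟨h', L', hh'1, hmem', hcprod', hφ', hsnd'⟩ :=
      ih (fun k => idx k.succ) (fun k => c k.succ) (fun k => g k.succ)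
        (fun k => tl k.succ) (fun k => α k.succ)
        (by
          intro k
          have := halt k.succ
          rwa [← Fin.succ_castSucc] at this)
        (fun k => hrep k.succ)
    simp only [Fin.succ_last] at hcprod' hφ'
    have hne01 : idx 0 ≠ idx 1 := by
      have := halt 0
      simpa using this
    have hmul : φ (tl 0 * h'.1) = φ (tl 0) * φ h'.1 :=
      hfree2 hne01 htl₀ hh'1
    refine ⟨h₀, M₀ ++ (tl 0 * h'.1, h'.2) :: L', (hmem₀ h₀ (by simp)).1, ?_, ?_, ?_, ?_⟩
    · intro p hp
      simp only [List.mem_cons, List.mem_append] at hp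
      rcases hp with hp | hp | hp
      · subst hp
        exact ⟨hA1 _ _ (hmem₀ p (by simp)).1, hF1 _ _ (hmem₀ p (by simp)).2⟩
      · exact ⟨hA1 _ _ (hmem₀ p (by simp [hp])).1, hF1 _ _ (hmem₀ p (by simp [hp])).2⟩
      · rcases hp with hp | hp
        · subst hp
          exact ⟨hA1mul _ (hA1 _ _ htl₀) _ (hA1 _ _ hh'1),
            (hmem' h' (by simp)).2⟩
        · exact (hmem' p (by simp [hp]))
    · rw [List.ofFn_succ, List.prod_cons, hcprod', hc₀]
      simp [mul_assoc]
    · rw [Fin.prod_univ_succ, ← hφ', hα₀]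
      simp only [List.map_cons, List.map_append, List.prod_cons, List.prod_append, hmul]
      ring
    · rw [List.ofFn_succ, List.prod_cons, ← hsnd', hg₀]
      simp [mul_assoc]

end Aux

theorem statement11
    {B : Type*} [Ring B] [Algebra ℂ B]
    (A : Subalgebra ℂ B) (F : Submodule ℂ B)
    (hFmulL : ∀ b : B, ∀ f ∈ F, b * f ∈ F)
    (hFmulR : ∀ b : B, ∀ f ∈ F, f * b ∈ F)
    (hAF : ∀ x ∈ A, x ∈ F → x = 0)
    (hdec : ∀ x : B, ∃ a ∈ A, ∃ f ∈ F, x = a + f)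
    (φ Φ : B →ₗ[ℂ] ℂ)
    (hφ1 : φ 1 = 1) (hφF : ∀ f ∈ F, φ f = 0)
    {ι : Type*}
    (Ai : ι → Subalgebra ℂ B) (hAi : ∀ i, Ai i ≤ A)
    (Fi : ι → NonUnitalSubalgebra ℂ B) (hFi : ∀ i, ∀ f ∈ Fi i, f ∈ F)
    (P : B) (hP : P ∈ F) (hΦP : Φ P ≠ 0)
    (hfree : IsFreeFamily ⇑φ (fun i => (Ai i : Set B)))
    (hcam : CyclicAntimonotone ⇑φ ⇑Φ
      (Algebra.adjoin ℂ (⋃ i, (Ai i : Set B)) : Set B)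
      (NonUnitalAlgebra.adjoin ℂ ({P} ∪ ⋃ i, (Fi i : Set B)) : Set B))
    (hbool : BoolIndep (fun b => Φ (P * b) / Φ P) (fun i => (Fi i : Set B))) :
    BoolIndep (fun b => Φ (P * b) / Φ P)
      (fun i => wordSpan (Ai i : Set B) (Fi i : Set B)) := by
  classical
  intro n idx c₀ halt hc₀
  show Φ (P * (List.ofFn c₀).prod) / Φ P = ∏ k, Φ (P * c₀ k) / Φ P
  set SA : Set B := ((Algebra.adjoin ℂ (⋃ i, (Ai i : Set B)) : Subalgebra ℂ B) : Set B) with hSAdef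
  set SF : Set B :=
    ((NonUnitalAlgebra.adjoin ℂ ({P} ∪ ⋃ i, (Fi i : Set B)) : NonUnitalSubalgebra ℂ B) : Set B)
    with hSFdef
  have h1SA : (1 : B) ∈ SA := one_mem (Algebra.adjoin ℂ (⋃ i, (Ai i : Set B)))
  have hAin : ∀ i : ι, ∀ x ∈ Ai i, x ∈ SA := fun i x hx =>
    Algebra.subset_adjoin (Set.mem_iUnion.2 ⟨i, hx⟩)
  have hFin : ∀ i : ι, ∀ x ∈ Fi i, x ∈ SF := fun i x hx =>
    NonUnitalAlgebra.subset_adjoin ℂ (Set.mem_union_right _ (Set.mem_iUnion.2 ⟨i, hx⟩))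
  have hPSF : P ∈ SF :=
    NonUnitalAlgebra.subset_adjoin ℂ (Set.mem_union_left _ rfl)
  have hSAmul : ∀ x ∈ SA, ∀ y ∈ SA, x * y ∈ SA := fun x hx y hy =>
    mul_mem (show x ∈ Algebra.adjoin ℂ (⋃ i, (Ai i : Set B)) from hx)
      (show y ∈ Algebra.adjoin ℂ (⋃ i, (Ai i : Set B)) from hy)
  have hfree2 : ∀ {i j : ι}, i ≠ j → ∀ {x y : B},
      x ∈ Ai i → y ∈ Ai j → φ (x * y) = φ x * φ y := by
    intro i j hij x y hx hy
    exact free_pair φ hφ1 Ai hfree hij hx hy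
  -- the case of pure words
  have hset : ∀ c : Fin (n + 1) → B,
      (∀ k, c k ∈ wordSet ((Ai (idx k) : Set B)) ((Fi (idx k) : Set B))) →
      Φ (P * (List.ofFn c).prod) / Φ P = ∏ k, Φ (P * c k) / Φ P := by
    intro c hc
    have hrep : ∀ k : Fin (n + 1), ∃ (g t : B) (αk : ℂ) (h : B × B) (M : List (B × B)),
        (∀ p ∈ (h :: M), p.1 ∈ Ai (idx k) ∧ p.2 ∈ Fi (idx k)) ∧
        t ∈ Ai (idx k) ∧
        c k = ((h :: M).map fun p => p.1 * p.2).prod * t ∧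
        g = ((h :: M).map Prod.snd).prod ∧
        αk = ((h :: M).map fun p => φ p.1).prod * φ t := by
      intro k
      obtain ⟨m, hm, a, f, ha, hf, hw⟩ := hc k
      obtain ⟨m', rfl⟩ : ∃ m', m = m' + 1 := ⟨m - 1, by omega⟩
      have hcons : (a (Fin.castSucc 0), f 0)
            :: List.ofFn (fun j : Fin m' => (a j.succ.castSucc, f j.succ))
          = List.ofFn (fun j : Fin (m' + 1) => (a j.castSucc, f j)) := by
        rw [List.ofFn_succ]
      refine ⟨_, a (Fin.last (m' + 1)), _, (a (Fin.castSucc 0), f 0),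
        List.ofFn (fun j : Fin m' => (a j.succ.castSucc, f j.succ)), ?_, ha _, ?_, rfl, rfl⟩
      · intro p hp
        rw [hcons] at hp
        rcases List.mem_ofFn.1 hp with ⟨j, rfl⟩
        exact ⟨ha _, hf _⟩
      · rw [hw, alt_shift, hcons, List.map_ofFn]
        rfl
    choose g tl α hh MM h1 h2 h3 h4 h5 using hrep
    obtain ⟨H, Lb, hH1, hmemb, hprodb, hφb, hsndb⟩ :=
      concat_struct φ Ai Fi SA SF hAin hFin hSAmul hfree2 n idx c g tl α halt
        (fun k => ⟨hh k, MM k, h1 k, h2 k, h3 k, h4 k, h5 k⟩)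
    have hKbig := Klist2 φ Φ SA SF h1SA P hPSF hcam (H :: Lb) (tl (Fin.last n))
      (hAin _ _ (h2 (Fin.last n))) hmemb
    have hmemg : ∀ k, g k ∈ (Fi (idx k) : Set B) := by
      intro k
      rw [h4 k, List.map_cons]
      refine listprod_mem_nus _ _ _ ((h1 k (hh k) (by simp)).2) ?_
      intro y hy
      rcases List.mem_map.1 hy with ⟨p, hp, rfl⟩
      exact (h1 k p (by simp [hp])).2
    have hgb : Φ (P * (List.ofFn g).prod) / Φ P = ∏ k, Φ (P * g k) / Φ P :=
      hbool n idx g halt hmemg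
    have hblock : ∀ k, Φ (P * c k) / Φ P = α k * (Φ (P * g k) / Φ P) := by
      intro k
      rw [h3 k]
      rw [Klist2 φ Φ SA SF h1SA P hPSF hcam (hh k :: MM k) (tl k) (hAin _ _ (h2 k))
        (fun p hp => ⟨hAin _ _ (h1 k p hp).1, hFin _ _ (h1 k p hp).2⟩)]
      rw [← h5 k, ← h4 k, mul_div_assoc]
    rw [hprodb, hKbig, hφb, hsndb, mul_div_assoc, hgb, ← Finset.prod_mul_distrib]
    exact Finset.prod_congr rfl fun k _ => (hblock k).symm
  -- multilinear extension from words to spans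
  have main : ∀ (m : ℕ) (c : Fin (n + 1) → B),
      (∀ k : Fin (n + 1), (k : ℕ) < m →
        c k ∈ Submodule.span ℂ (wordSet ((Ai (idx k) : Set B)) ((Fi (idx k) : Set B)))) →
      (∀ k : Fin (n + 1), ¬ (k : ℕ) < m →
        c k ∈ wordSet ((Ai (idx k) : Set B)) ((Fi (idx k) : Set B))) →
      Φ (P * (List.ofFn c).prod) / Φ P = ∏ k, Φ (P * c k) / Φ P := by
    intro m
    induction m with
    | zero => exact fun c _ h2' => hset c fun k => h2' k (by omega)
    | succ m ihm =>
      intro c h1' h2'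
      by_cases hmn : m < n + 1
      · set K : Fin (n + 1) := ⟨m, hmn⟩ with hK
        have hT : ∀ x : B, (List.ofFn (Function.update c K x)).prod
            = ((List.ofFn c).take (K : ℕ)).prod * x * ((List.ofFn c).drop ((K : ℕ) + 1)).prod := by
          intro x
          rw [ofFn_update_eq_set, List.prod_set, List.length_ofFn, if_pos K.isLt]
        have hU : ∀ x : B, (fun k => Φ (P * Function.update c K x k) / Φ P)
            = Function.update (fun k => Φ (P * c k) / Φ P) K (Φ (P * x) / Φ P) := by
          intro x
          funext k
          rcases eq_or_ne k K with rfl | hk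
          · simp
          · simp [Function.update_of_ne hk]
        have hspan : c K ∈ Submodule.span ℂ
            (wordSet ((Ai (idx K) : Set B)) ((Fi (idx K) : Set B))) :=
          h1' K (Nat.lt_succ_self m)
        have hupd : ∀ x ∈ Submodule.span ℂ
            (wordSet ((Ai (idx K) : Set B)) ((Fi (idx K) : Set B))),
            Φ (P * (List.ofFn (Function.update c K x)).prod) / Φ P
              = ∏ k, Φ (P * Function.update c K x k) / Φ P := by
          intro x hx
          induction hx using Submodule.span_induction with
          | mem z hz =>
            apply ihm
            · intro k hk
              rw [Function.update_of_ne (by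
                rintro rfl
                exact absurd hk (by simp [hK]))]
              exact h1' k (by omega)
            · intro k hk
              rcases eq_or_ne k K with rfl | hne
              · rw [Function.update_self]
                exact hz
              · rw [Function.update_of_ne hne]
                apply h2' k
                have hkm : (k : ℕ) ≠ m := fun hc' => hne (Fin.ext (by simp [hK, hc']))
                omega
          | zero =>
            rw [hT 0, hU 0, mul_zero, zero_mul, mul_zero, map_zero, zero_div]
            symm
            apply Finset.prod_eq_zero (Finset.mem_univ K)
            rw [Function.update_self]
          | add x y hx' hy' ihx ihy =>
            rw [hT x, hU x, Finset.prod_update_of_mem (Finset.mem_univ K)] at ihx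
            rw [hT y, hU y, Finset.prod_update_of_mem (Finset.mem_univ K)] at ihy
            rw [hT (x + y), hU (x + y), Finset.prod_update_of_mem (Finset.mem_univ K)]
            have et : ((List.ofFn c).take (K : ℕ)).prod * (x + y)
                  * ((List.ofFn c).drop ((K : ℕ) + 1)).prod
                = ((List.ofFn c).take (K : ℕ)).prod * x * ((List.ofFn c).drop ((K : ℕ) + 1)).prod
                  + ((List.ofFn c).take (K : ℕ)).prod * y
                    * ((List.ofFn c).drop ((K : ℕ) + 1)).prod := by
              rw [mul_add, add_mul]
            rw [et, mul_add, map_add, add_div, ihx, ihy]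
            rw [mul_add P x y, map_add, add_div, add_mul]
          | smul r x hx' ihx =>
            rw [hT x, hU x, Finset.prod_update_of_mem (Finset.mem_univ K)] at ihx
            rw [hT (r • x), hU (r • x), Finset.prod_update_of_mem (Finset.mem_univ K)]
            have et : ((List.ofFn c).take (K : ℕ)).prod * (r • x)
                  * ((List.ofFn c).drop ((K : ℕ) + 1)).prod
                = r • (((List.ofFn c).take (K : ℕ)).prod * x
                    * ((List.ofFn c).drop ((K : ℕ) + 1)).prod) := by
              rw [mul_smul_comm, smul_mul_assoc]
            rw [et, mul_smul_comm, map_smul, smul_eq_mul, mul_div_assoc, ihx]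
            rw [mul_smul_comm r P x, map_smul, smul_eq_mul, mul_div_assoc, mul_assoc]
        have hfin := hupd (c K) hspan
        rwa [Function.update_eq_self] at hfin
      · exact ihm c (fun k hk => h1' k (by omega))
          (fun k hk => absurd (by have := k.isLt; omega : (k : ℕ) < m) hk)
  exact main (n + 1) c₀ (fun k _ => hc₀ k) (fun k hk => absurd k.isLt hk)


end TypeBPrime
end

section
/- For every a ∈ A and every n ≥ 1 one has φ((p a p)ⁿ) = φ(aⁿ) and φ′((p a p)ⁿ) = −tₙ, where (tₙ)_{n≥0} is the inverse Markov–Krein transform of the moment sequence mₙ := φ(aⁿ) (with m₀ := 1). Equivalently, with ψ := φ and ψ′ := φ + φ′, one has ψ′((p a p)ⁿ) = mₙ − tₙ for all n ≥ 1 and ψ′(p) = 0; that is, the infinitesimal distribution of p a p with respect to (ψ, ψ′) is (μ, μ − τ), where μ is the distribution of a with respect to φ and τ is the inverse Markov–Krein transform of μ. -/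
open scoped BigOperators

namespace TypeBPrime

variable {B : Type*} [Ring B] [Algebra ℂ B]

section ScalarAux

open Finset

/-- The inverse moment sequence: coefficients of `1/M(z)` for `M(z) = Σ mₙ zⁿ`, `m₀ = 1`. -/
noncomputable def dseq (m : ℕ → ℂ) : ℕ → ℂ
  | 0 => 1
  | n + 1 => -∑ j ∈ Finset.range (n + 1), m (j + 1) * dseq m (n - j)
decreasing_by exact Nat.lt_succ_of_le (Nat.sub_le _ _)

lemma dseq_zero (m : ℕ → ℂ) : dseq m 0 = 1 := by simp [dseq]

lemma dseq_succ (m : ℕ → ℂ) (n : ℕ) :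
    dseq m (n+1) = -∑ j ∈ Finset.range (n + 1), m (j + 1) * dseq m (n - j) := by
  rw [dseq]

lemma swap_tri (n : ℕ) (f : ℕ → ℕ → ℂ) :
    ∑ j ∈ range (n+1), ∑ l ∈ range (n+1-j), f j l
      = ∑ l ∈ range (n+1), ∑ j ∈ range (n+1-l), f j l := by
  have key : ∀ (g : ℕ → ℕ → ℂ), ∑ j ∈ range (n+1), ∑ l ∈ range (n+1-j), g j l
      = ∑ j ∈ range (n+1), ∑ l ∈ range (n+1), if j + l ≤ n then g j l else 0 := by
    intro g
    refine Finset.sum_congr rfl fun j hj => ?_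
    have hj' : j ≤ n := by simpa using Nat.lt_succ_iff.mp (mem_range.mp hj)
    have : (Finset.range (n+1)).filter (fun l => j + l ≤ n) = Finset.range (n+1-j) := by
      ext l; simp only [mem_filter, mem_range]; omega
    rw [← this, Finset.sum_filter]
  rw [key f, Finset.sum_comm, key (fun l j => f j l)]
  refine Finset.sum_congr rfl fun l _ => Finset.sum_congr rfl fun j _ => ?_
  exact if_congr (by omega) rfl rfl

/-- convolution of `m` with `dseq m` is a delta, given `m 0 = 1`. -/
lemma dseq_conv (m : ℕ → ℂ) (hm0 : m 0 = 1) (l : ℕ) :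
    ∑ j ∈ range (l+1), m j * dseq m (l-j) = if l = 0 then 1 else 0 := by
  cases l with
  | zero => simp [dseq_zero, hm0]
  | succ l =>
      rw [Finset.sum_range_succ']
      simp only [Nat.sub_zero, hm0, one_mul, Nat.succ_sub_succ]
      rw [dseq_succ, if_neg (Nat.succ_ne_zero l)]
      ring

/-- triangle sum with diagonal weight. -/
lemma tri_count (n : ℕ) (F : ℕ → ℂ) :
    ∑ i ∈ range (n+1), ∑ j ∈ range (n+1-i), F (i+j)
      = ∑ l ∈ range (n+1), ((l:ℂ)+1) * F l := by
  induction n with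
  | zero => simp
  | succ n ih =>
      have step : ∀ i ∈ range (n+2), ∑ j ∈ range (n+2-i), F (i+j)
          = (∑ j ∈ range (n+1-i), F (i+j)) + F (n+1) := by
        intro i hi
        have hi' : i ≤ n+1 := Nat.lt_succ_iff.mp (mem_range.mp hi)
        have h2 : n+2-i = (n+1-i)+1 := by omega
        rw [h2, Finset.sum_range_succ]
        congr 2
        omega
      rw [Finset.sum_congr rfl step, Finset.sum_add_distrib,
        Finset.sum_range_succ (fun i => ∑ j ∈ range (n+1-i), F (i+j))]
      simp only [Nat.sub_self, Finset.range_zero, Finset.sum_empty, add_zero]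
      rw [ih, Finset.sum_const, Finset.card_range,
        Finset.sum_range_succ (fun l => ((l:ℂ)+1) * F l) (n+1), nsmul_eq_mul]
      push_cast
      ring

/-- the key scalar identity for the induction step of the word computation. -/
lemma keyG (m : ℕ → ℂ) (i M : ℕ) :
    m (i+(M+1)) - ∑ j ∈ range (M+1), m (j+1) * (∑ l ∈ range (M-j+1), m (i+l) * dseq m (M-j-l))
      = ∑ j ∈ range (M+2), m (i+j) * dseq m (M+1-j) := by
  have hswap : ∑ j ∈ range (M+1), ∑ l ∈ range (M+1-j), m (j+1) * (m (i+l) * dseq m (M-j-l))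
      = ∑ l ∈ range (M+1), ∑ j ∈ range (M+1-l), m (j+1) * (m (i+l) * dseq m (M-j-l)) :=
    swap_tri M (fun j l => m (j+1) * (m (i+l) * dseq m (M-j-l)))
  have e1 : ∀ j ∈ range (M+1), m (j+1) * (∑ l ∈ range (M-j+1), m (i+l) * dseq m (M-j-l))
      = ∑ l ∈ range (M+1-j), m (j+1) * (m (i+l) * dseq m (M-j-l)) := by
    intro j hj
    rw [Finset.mul_sum, show M-j+1 = M+1-j from by have := mem_range.mp hj; omega]
  have e2 : ∀ l ∈ range (M+1), ∑ j ∈ range (M+1-l), m (j+1) * (m (i+l) * dseq m (M-j-l))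
      = m (i+l) * (∑ j ∈ range (M-l+1), m (j+1) * dseq m (M-l-j)) := by
    intro l hl
    rw [Finset.mul_sum, show M-l+1 = M+1-l from by have := mem_range.mp hl; omega]
    refine Finset.sum_congr rfl fun j hj => ?_
    rw [show M-j-l = M-l-j from by omega]; ring
  have h1 : ∑ j ∈ range (M+1), m (j+1) * (∑ l ∈ range (M-j+1), m (i+l) * dseq m (M-j-l))
      = ∑ l ∈ range (M+1), m (i+l) * (∑ j ∈ range (M-l+1), m (j+1) * dseq m (M-l-j)) :=
    (Finset.sum_congr rfl e1).trans (hswap.trans (Finset.sum_congr rfl e2))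
  rw [h1]
  have h2 : ∀ l ∈ range (M+1), m (i+l) * (∑ j ∈ range (M-l+1), m (j+1) * dseq m (M-l-j))
      = - (m (i+l) * dseq m (M+1-l)) := by
    intro l hl
    have hl' : l ≤ M := Nat.lt_succ_iff.mp (mem_range.mp hl)
    rw [show M+1-l = (M-l)+1 from by omega, dseq_succ]
    ring
  rw [Finset.sum_congr rfl h2,
    Finset.sum_range_succ (fun j => m (i+j) * dseq m (M+1-j))]
  simp only [Nat.sub_self, dseq_zero, mul_one, Finset.sum_neg_distrib]
  ring

lemma tri_swap2 (n : ℕ) (h : ℕ → ℕ → ℂ) :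
    ∑ l ∈ range (n+1), ∑ r ∈ range (l+1), h l r
      = ∑ r ∈ range (n+1), ∑ j ∈ range (n+1-r), h (r+j) r := by
  have step1 : ∑ l ∈ range (n+1), ∑ r ∈ range (l+1), h l r
      = ∑ l ∈ range (n+1), ∑ r ∈ range (n+1), if r ≤ l then h l r else 0 := by
    refine Finset.sum_congr rfl fun l hl => ?_
    have hl' : l ≤ n := Nat.lt_succ_iff.mp (mem_range.mp hl)
    have : (Finset.range (n+1)).filter (fun r => r ≤ l) = Finset.range (l+1) := by
      ext r; simp only [mem_filter, mem_range]; omega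
    rw [← this, Finset.sum_filter]
  rw [step1, Finset.sum_comm]
  refine Finset.sum_congr rfl fun r hr => ?_
  have : (Finset.range (n+1)).filter (fun l => r ≤ l) = Finset.Ico r (n+1) := by
    ext l; simp only [mem_filter, mem_range, mem_Ico]; omega
  rw [← Finset.sum_filter, this, Finset.sum_Ico_eq_sum_range]

lemma scalar_main (m t : ℕ → ℂ) (hm0 : m 0 = 1)
    (ht : ∀ k : ℕ, ((k : ℂ) + 1) * m k = ∑ j ∈ Finset.range (k + 1), t j * m (k - j)) (n : ℕ) :
    ∑ i ∈ range (n+1), ∑ j ∈ range (n+1-i), m (i+j) * dseq m (n-i-j) = t n := by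
  have h0 : ∑ i ∈ range (n+1), ∑ j ∈ range (n+1-i), m (i+j) * dseq m (n-i-j)
      = ∑ i ∈ range (n+1), ∑ j ∈ range (n+1-i), m (i+j) * dseq m (n-(i+j)) := by
    refine Finset.sum_congr rfl fun i _ => Finset.sum_congr rfl fun j _ => ?_
    rw [show n-i-j = n-(i+j) from by omega]
  rw [h0, tri_count n (fun l => m l * dseq m (n-l))]
  have h1 : ∀ l ∈ range (n+1), ((l:ℂ)+1) * (m l * dseq m (n-l))
      = ∑ r ∈ range (l+1), t r * m (l-r) * dseq m (n-l) := by
    intro l _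
    rw [← mul_assoc, ht l, Finset.sum_mul]
  rw [Finset.sum_congr rfl h1, tri_swap2 n (fun l r => t r * m (l-r) * dseq m (n-l))]
  have h2 : ∀ r ∈ range (n+1), ∑ j ∈ range (n+1-r), t r * m (r+j-r) * dseq m (n-(r+j))
      = t r * (if n - r = 0 then 1 else 0) := by
    intro r hr
    rw [show (fun j => t r * m (r+j-r) * dseq m (n-(r+j))) = fun j => t r * (m j * dseq m ((n-r)-j)) from
      funext fun j => by rw [show r+j-r = j from by omega, show n-(r+j) = n-r-j from by omega]; ring]
    rw [← Finset.mul_sum]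
    congr 1
    have := dseq_conv m hm0 (n-r)
    rw [show n+1-r = (n-r)+1 from by have := mem_range.mp hr; omega]
    exact this
  rw [Finset.sum_congr rfl h2]
  rw [Finset.sum_eq_single_of_mem n (self_mem_range_succ n)]
  · simp
  · intro r hr hrn
    have : ¬ (n - r = 0) := by have := mem_range.mp hr; omega
    simp [this]

end ScalarAux

theorem statement13
    {B : Type*} [Ring B] [Algebra ℂ B]
    (A : Subalgebra ℂ B) (F : Submodule ℂ B)
    (hFmulL : ∀ b : B, ∀ f ∈ F, b * f ∈ F)
    (hFmulR : ∀ b : B, ∀ f ∈ F, f * b ∈ F)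
    (hAF : ∀ x ∈ A, x ∈ F → x = 0)
    (hdec : ∀ x : B, ∃ a ∈ A, ∃ f ∈ F, x = a + f)
    (φ Φ φ' : B →ₗ[ℂ] ℂ)
    (hφ1 : φ 1 = 1) (hφF : ∀ f ∈ F, φ f = 0)
    (hφ'A : ∀ a ∈ A, φ' a = 0) (hφ'F : ∀ f ∈ F, φ' f = Φ f)
    (q : B) (hqF : q ∈ F) (hq2 : q * q = q) (hΦq : Φ q = 1)
    (hcamq : CyclicAntimonotone ⇑φ ⇑Φ (A : Set B) {x | ∃ c : ℂ, x = c • q})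
    (a : B) (ha : a ∈ A)
    (t : ℕ → ℂ) (ht : IsInvMK (fun n => φ (a ^ n)) t) :
    ∀ n : ℕ, 0 < n →
      φ (((1 - q) * a * (1 - q)) ^ n) = φ (a ^ n) ∧
      φ' (((1 - q) * a * (1 - q)) ^ n) = - t n := by
  -- ## basic algebraic facts
  have hqpow : ∀ k : ℕ, q ^ (k+1) = q := by
    intro k; induction k with
    | zero => simp
    | succ k ih => rw [pow_succ, ih, hq2]
  have hp2 : ((1:B) - q) * (1 - q) = 1 - q := by
    have h : ((1:B) - q) * (1 - q) = 1 - q - q + q * q := by noncomm_ring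
    rw [h, hq2]; abel
  have hE1 : ∀ k : ℕ, ((1-q)*a*(1-q))^(k+1) = ((1-q)*a)^(k+1) * (1-q) := by
    intro k; induction k with
    | zero => rw [pow_one, pow_one]
    | succ k ih =>
        rw [pow_succ ((1-q)*a*(1-q)) (k+1), ih]
        calc ((1-q)*a)^(k+1) * (1-q) * ((1-q)*a*(1-q))
            = ((1-q)*a)^(k+1) * (((1-q) * (1-q)) * (a*(1-q))) := by
              simp only [mul_assoc]
          _ = ((1-q)*a)^(k+1) * ((1-q)*a) * (1-q) := by
              rw [hp2]; simp only [mul_assoc]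
          _ = ((1-q)*a)^(k+1+1) * (1-q) := by rw [← pow_succ]
  have hAP : ∀ k : ℕ, a * ((1-q)*a)^k * (1-q) = (a*(1-q))^(k+1) := by
    intro k; induction k with
    | zero => rw [pow_zero, mul_one, pow_one]
    | succ k ih =>
        rw [pow_succ']
        calc a * ((1-q)*a * ((1-q)*a)^k) * (1-q)
            = (a*(1-q)) * (a * ((1-q)*a)^k * (1-q)) := by simp only [mul_assoc]
          _ = (a*(1-q)) * (a*(1-q))^(k+1) := by rw [ih]
          _ = (a*(1-q))^(k+1+1) := (pow_succ' _ _).symm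
  have hE2 : ∀ k : ℕ, ((1-q)*a)^k * (1-q)
      = a^k - ∑ i ∈ Finset.range (k+1), a^i * (q * (a*(1-q))^(k-i)) := by
    intro k; induction k with
    | zero => simp
    | succ k ih =>
        rw [pow_succ' ((1-q)*a) k]
        have h1 : (1-q)*a * ((1-q)*a)^k * (1-q)
            = a * (((1-q)*a)^k * (1-q)) - q * (a*(1-q))^(k+1) := by
          have h2 : (1-q)*a * ((1-q)*a)^k * (1-q)
              = a * (((1-q)*a)^k * (1-q)) - q * (a * ((1-q)*a)^k * (1-q)) := by
            noncomm_ring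
          rw [h2, hAP k]
        rw [h1, ih, mul_sub, Finset.mul_sum,
          Finset.sum_range_succ' (fun i => a^i * (q * (a*(1-q))^(k+1-i))) (k+1)]
        simp only [pow_zero, one_mul, Nat.sub_zero, Nat.succ_sub_succ]
        rw [← pow_succ' a k]
        have h3 : ∀ i ∈ Finset.range (k+1),
            a * (a^i * (q * (a*(1-q))^(k-i))) = a^(i+1) * (q * (a*(1-q))^(k-i)) := by
          intro i _; rw [pow_succ' a i, mul_assoc]
        rw [Finset.sum_congr rfl h3]
        abel
  have hE3 : ∀ k : ℕ, (a*(1-q))^(k+1)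
      = a^(k+1) - ∑ j ∈ Finset.range (k+1), a^(j+1) * (q * (a*(1-q))^(k-j)) := by
    intro k; induction k with
    | zero => simp [mul_sub, pow_one]
    | succ k ih =>
        rw [pow_succ' (a*(1-q)) (k+1)]
        have h1 : (a*(1-q)) * (a*(1-q))^(k+1)
            = a * (a*(1-q))^(k+1) - a^1 * (q * (a*(1-q))^(k+1)) := by
          noncomm_ring
        rw [h1]
        nth_rewrite 1 [ih]
        rw [mul_sub, Finset.mul_sum,
          Finset.sum_range_succ' (fun j => a^(j+1) * (q * (a*(1-q))^(k+1-j))) (k+1)]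
        simp only [Nat.succ_sub_succ, Nat.sub_zero, Nat.zero_add, zero_add]
        rw [← pow_succ' a (k+1)]
        have h3 : ∀ j ∈ Finset.range (k+1),
            a * (a^(j+1) * (q * (a*(1-q))^(k-j))) = a^(j+1+1) * (q * (a*(1-q))^(k-j)) := by
          intro j _; rw [pow_succ' a (j+1), mul_assoc]
        rw [Finset.sum_congr rfl h3]
        abel
  -- ## membership facts
  have hmodF : ∀ k : ℕ, ((1-q)*a*(1-q))^k - a^k ∈ F := by
    intro k; induction k with
    | zero => simp
    | succ k ih =>
        have hxa : (1-q)*a*(1-q) - a ∈ F := by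
          have h : (1-q)*a*(1-q) - a = -(q*(a*(1-q))) - a*q := by noncomm_ring
          rw [h]
          exact F.sub_mem (F.neg_mem (hFmulR _ q hqF)) (hFmulL a q hqF)
        have h : ((1-q)*a*(1-q))^(k+1) - a^(k+1)
            = (((1-q)*a*(1-q))^k - a^k) * ((1-q)*a*(1-q)) + a^k * ((1-q)*a*(1-q) - a) := by
          rw [pow_succ, pow_succ]; noncomm_ring
        rw [h]
        exact F.add_mem (hFmulR _ _ ih) (hFmulL _ _ hxa)
  have hφpart : ∀ k : ℕ, φ (((1-q)*a*(1-q))^k) = φ (a^k) := by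
    intro k
    have h := hφF _ (hmodF k)
    rw [map_sub] at h
    exact sub_eq_zero.mp h
  have hφ'eq : ∀ k : ℕ, φ' (((1-q)*a*(1-q))^k) = Φ (((1-q)*a*(1-q))^k - a^k) := by
    intro k
    have h1 := hφ'F _ (hmodF k)
    rw [map_sub, hφ'A _ (pow_mem ha k), sub_zero] at h1
    exact h1
  -- ## evaluation of cyclic words
  have heval : ∀ (s : ℕ) (e : ℕ → ℕ) (i j : ℕ),
      Φ (a^i * (List.ofFn fun k : Fin s => q * a ^ e k).prod * (q * a^j))
        = (∏ k ∈ Finset.range s, φ (a ^ e k)) * φ (a ^ (i+j)) := by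
    intro s e i j
    set ee : Fin (s+2) → ℕ :=
      fun k => if (k:ℕ) = 0 then i else if (k:ℕ) = s+1 then j else e ((k:ℕ) - 1) with hee
    have hmain := hcamq (s+1) (Nat.succ_pos s) (fun k => a ^ ee k) (fun _ => q)
      (fun k => pow_mem ha (ee k)) (fun k => ⟨1, (one_smul ℂ q).symm⟩)
    have he0 : ee 0 = i := by simp [hee]
    have heL : ee (Fin.last (s+1)) = j := by simp [hee]
    have hfprod : (List.ofFn fun _ : Fin (s+1) => q).prod = q := by
      rw [List.ofFn_const, List.prod_replicate]; exact hqpow s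
    have hword : altWord (fun k => a ^ ee k) (fun _ : Fin (s+1) => q)
        = a^i * (List.ofFn fun k : Fin s => q * a ^ e k).prod * (q * a^j) := by
      simp only [altWord]
      rw [List.ofFn_succ', List.prod_concat]
      have h1 : (List.ofFn fun k : Fin s => q * a ^ ee (k.castSucc.succ))
          = List.ofFn fun k : Fin s => q * a ^ e k := by
        congr 1; funext k
        have hk : ((k.castSucc.succ : Fin (s+2)) : ℕ) = (k:ℕ) + 1 := by simp
        have hv : ee k.castSucc.succ = e k := by
          rw [hee]; simp only [hk]
          rw [if_neg (by omega), if_neg (by omega : ¬ (k:ℕ)+1 = s+1)]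
          simp
        rw [hv]
      have h2 : q * a ^ ee ((Fin.last s).succ) = q * a ^ j := by
        rw [Fin.succ_last, heL]
      rw [he0, h1, h2, mul_assoc]
    have hIoo : (∏ k ∈ Finset.Ioo (0 : Fin (s+2)) (Fin.last (s+1)), φ (a ^ ee k))
        = ∏ k ∈ Finset.range s, φ (a ^ e k) := by
      refine Finset.prod_bij' (fun (k : Fin (s+2)) _ => (k:ℕ) - 1)
        (fun (k : ℕ) hk => (⟨k+1, by have := Finset.mem_range.mp hk; omega⟩ : Fin (s+2)))
        ?_ ?_ ?_ ?_ ?_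
      · intro b hb
        have hmem := Finset.mem_Ioo.mp hb
        have h1 : 0 < (b:ℕ) := hmem.1
        have h2 : (b:ℕ) < s+1 := by simpa [Fin.lt_def] using hmem.2
        simp only [Finset.mem_range]; omega
      · intro k hk
        have hk' := Finset.mem_range.mp hk
        rw [Finset.mem_Ioo]
        refine ⟨by simp [Fin.lt_def], by simp [Fin.lt_def]; omega⟩
      · intro b hb
        have hmem := Finset.mem_Ioo.mp hb
        have h1 : 0 < (b:ℕ) := hmem.1
        apply Fin.ext
        simp; omega
      · intro k hk; simp
      · intro b hb
        have hmem := Finset.mem_Ioo.mp hb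
        have h1 : 0 < (b:ℕ) := hmem.1
        have h2 : (b:ℕ) < s+1 := by simpa [Fin.lt_def] using hmem.2
        have hv : ee b = e ((b:ℕ) - 1) := by
          rw [hee]; simp only
          rw [if_neg (by omega), if_neg (by omega)]
        rw [hv]
    rw [hword, hfprod, hΦq, mul_one] at hmain
    beta_reduce at hmain
    rw [he0, heL, hIoo, ← pow_add] at hmain
    rw [hmain, mul_comm]
  have hchunk : ∀ (g : ℕ → ℕ) (s' : ℕ),
      (List.ofFn fun k : Fin (s'+1) => q * a ^ g k).prod
        = (List.ofFn fun k : Fin s' => q * a ^ g k).prod * (q * a ^ g s') := by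
    intro g s'
    rw [List.ofFn_succ', List.prod_concat]
    congr 1
    all_goals simp
  -- ## the key word computation, by induction on the tail length
  have hKeyB : ∀ M : ℕ, ∀ (s : ℕ) (e : ℕ → ℕ) (i : ℕ),
      Φ (a^i * (List.ofFn fun k : Fin s => q * a ^ e k).prod * (q * (a*(1-q))^M))
        = (∏ k ∈ Finset.range s, φ (a ^ e k))
            * (∑ j ∈ Finset.range (M+1), φ (a^(i+j)) * dseq (fun r => φ (a^r)) (M-j)) := by
    intro M
    induction M using Nat.strong_induction_on with
    | _ M ih =>
      rcases M with _ | M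
      · intro s e i
        rw [pow_zero]
        calc Φ (a^i * (List.ofFn fun k : Fin s => q * a ^ e k).prod * (q * 1))
            = Φ (a^i * (List.ofFn fun k : Fin s => q * a ^ e k).prod * (q * a^0)) := by
              rw [pow_zero]
          _ = (∏ k ∈ Finset.range s, φ (a ^ e k)) * φ (a ^ (i+0)) := heval s e i 0
          _ = (∏ k ∈ Finset.range s, φ (a ^ e k))
                * (∑ j ∈ Finset.range 1, φ (a^(i+j)) * dseq (fun r => φ (a^r)) (0-j)) := by
              simp [dseq_zero]
      · intro s e i
        rw [hE3 M]
        have hsplit : a^i * (List.ofFn fun k : Fin s => q * a ^ e k).prod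
              * (q * (a^(M+1) - ∑ j ∈ Finset.range (M+1), a^(j+1) * (q * (a*(1-q))^(M-j))))
            = a^i * (List.ofFn fun k : Fin s => q * a ^ e k).prod * (q * a^(M+1))
              - ∑ j ∈ Finset.range (M+1), a^i * (List.ofFn fun k : Fin s => q * a ^ e k).prod
                  * (q * (a^(j+1) * (q * (a*(1-q))^(M-j)))) := by
          rw [mul_sub, mul_sub, Finset.mul_sum, Finset.mul_sum]
        rw [hsplit, map_sub, map_sum, heval s e i (M+1)]
        have hterm : ∀ j ∈ Finset.range (M+1),
            Φ (a^i * (List.ofFn fun k : Fin s => q * a ^ e k).prod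
                * (q * (a^(j+1) * (q * (a*(1-q))^(M-j)))))
              = (∏ k ∈ Finset.range s, φ (a ^ e k))
                  * (φ (a^(j+1)) * (∑ l ∈ Finset.range ((M-j)+1),
                      φ (a^(i+l)) * dseq (fun r => φ (a^r)) ((M-j)-l))) := by
          intro j _
          have hre : a^i * (List.ofFn fun k : Fin s => q * a ^ e k).prod
                * (q * (a^(j+1) * (q * (a*(1-q))^(M-j))))
              = a^i * (List.ofFn fun k : Fin (s+1) =>
                    q * a ^ (fun r => if r = s then j+1 else e r) k).prod
                  * (q * (a*(1-q))^(M-j)) := by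
            rw [hchunk (fun r => if r = s then j+1 else e r) s, if_pos rfl]
            have hsame : (List.ofFn fun k : Fin s => q * a ^ (if (k:ℕ) = s then j+1 else e k))
                = List.ofFn fun k : Fin s => q * a ^ e k := by
              congr 1; funext k; rw [if_neg (by omega)]
            rw [hsame]
            simp only [mul_assoc]
          rw [hre, ih (M-j) (by omega) (s+1) (fun r => if r = s then j+1 else e r) i,
            Finset.prod_range_succ]
          have hpr : (∏ k ∈ Finset.range s, φ (a ^ (if k = s then j+1 else e k)))
              = ∏ k ∈ Finset.range s, φ (a ^ e k) := by
            refine Finset.prod_congr rfl fun k hk => ?_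
            rw [if_neg (Nat.ne_of_lt (Finset.mem_range.mp hk))]
          rw [hpr, if_pos rfl, mul_assoc]
        rw [Finset.sum_congr rfl hterm, ← Finset.mul_sum, ← mul_sub]
        congr 1
        exact keyG (fun r => φ (a^r)) i M
  -- ## assembling everything
  intro n hn
  obtain ⟨k, rfl⟩ : ∃ k, n = k+1 := ⟨n-1, by omega⟩
  refine ⟨hφpart (k+1), ?_⟩
  rw [hφ'eq (k+1), hE1 k, hE2 (k+1)]
  have hsub : a^(k+1) - (∑ i ∈ Finset.range (k+2), a^i * (q * (a*(1-q))^(k+1-i))) - a^(k+1)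
      = -∑ i ∈ Finset.range (k+2), a^i * (q * (a*(1-q))^(k+1-i)) := by abel
  rw [hsub, map_neg, map_sum]
  have hterm : ∀ i ∈ Finset.range (k+2), Φ (a^i * (q * (a*(1-q))^(k+1-i)))
      = ∑ j ∈ Finset.range ((k+1-i)+1), φ (a^(i+j)) * dseq (fun r => φ (a^r)) ((k+1-i)-j) := by
    intro i _
    have h := hKeyB (k+1-i) 0 (fun _ => 0) i
    simp only [List.ofFn_zero, List.prod_nil, mul_one, Finset.range_zero,
      Finset.prod_empty, one_mul] at h
    exact h
  rw [Finset.sum_congr rfl hterm]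
  have hfin : ∑ i ∈ Finset.range (k+2), ∑ j ∈ Finset.range ((k+1-i)+1),
      φ (a^(i+j)) * dseq (fun r => φ (a^r)) ((k+1-i)-j) = t (k+1) := by
    have hmm : ∑ i ∈ Finset.range ((k+1)+1), ∑ j ∈ Finset.range ((k+1)+1-i),
        (fun r => φ (a^r)) (i+j) * dseq (fun r => φ (a^r)) ((k+1)-i-j) = t (k+1) :=
      scalar_main (fun r => φ (a^r)) t (by simp [hφ1]) ht (k+1)
    refine Eq.trans ?_ hmm
    refine Finset.sum_congr rfl fun i hi => ?_
    have hi' := Finset.mem_range.mp hi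
    rw [show (k+1)+1-i = (k+1-i)+1 from by omega]
  rw [hfin]

end TypeBPrime
end
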